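/- arXiv:1209.1873 — 4 statements merged into one kernel-verified Lean document; each statement's English description precedes it below -/
import Mathlib

section
/- One-step improvement bound (key lemma): Let γ ≥ 0 and suppose each convex conjugate φ_i* is γ-strongly convex, i.e., φ_i*(su + (1−s)v) ≤ s φ_i*(u) + (1−s) φ_i*(v) − (γ/2)s(1−s)(u−v)² whenever φ_i*(u), φ_i*(v) < ∞ and s ∈ [0,1]. Let α ∈ ℝⁿ with φ_i*(−α_i) < ∞ for all i, let w = w(α), and let u ∈ ℝⁿ satisfy −u_i ∈ ∂φ_i(x_iᵀw) for each i. Then for every s ∈ (0,1]: (1/n)∑_{i=1}^n [D(α + s(u_i − α_i)e_i) − D(α)] ≥ (s/n)(P(w) − D(α)) − (s/n)²·G/(2λ), where G = (1/n)∑_{i=1}^n (‖x_i‖² − γ(1−s)λn/s)(u_i − α_i)² and e_i is the i-th standard basis vector of ℝⁿ. -/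
open scoped BigOperators RealInnerProductSpace
open Finset

/-- The convex conjugate `φ*(u) = sup_z (z*u - φ z)` (as a real number; junk value
when the supremum is not finite). -/
noncomputable def fconj (φ : ℝ → ℝ) (u : ℝ) : ℝ := ⨆ z : ℝ, (z * u - φ z)

/-- `φ*(u) < ∞`, i.e. the defining supremum of the conjugate is finite. -/
def FiniteConj (φ : ℝ → ℝ) (u : ℝ) : Prop :=
  BddAbove (Set.range fun z => z * u - φ z)

/-- `g ∈ ∂φ(a)`: `g` is a subgradient of `φ` at `a`. -/
def IsSubgrad (φ : ℝ → ℝ) (a g : ℝ) : Prop :=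
  ∀ b, φ a + g * (b - a) ≤ φ b

/-- `u ∈ ∂φ*(b)`: `u` is a subgradient of the conjugate `φ*` at `b`
(the subgradient inequality being required at all points where `φ*` is finite). -/
def ConjSubgrad (φ : ℝ → ℝ) (b u : ℝ) : Prop :=
  FiniteConj φ b ∧ ∀ v, FiniteConj φ v → fconj φ b + u * (v - b) ≤ fconj φ v

/-- Dual feasibility: `φ_i*(-α_i) < ∞` for all `i`. -/
def Feas {n : ℕ} (φ : Fin n → ℝ → ℝ) (α : Fin n → ℝ) : Prop :=
  ∀ i, FiniteConj (φ i) (-(α i))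

/-- `w(α) = (1/(λ n)) ∑ι α_i x_i`. -/
noncomputable def wvec {n d : ℕ} (lam : ℝ) (x : Fin n → EuclideanSpace ℝ (Fin d))
    (α : Fin n → ℝ) : EuclideanSpace ℝ (Fin d) :=
  (1 / (lam * (n : ℝ))) • ∑ i, α i • x i

/-- The primal objective `P(w)`. -/
noncomputable def primalObj {n d : ℕ} (lam : ℝ) (x : Fin n → EuclideanSpace ℝ (Fin d))
    (φ : Fin n → ℝ → ℝ) (w : EuclideanSpace ℝ (Fin d)) : ℝ :=
  (1 / (n : ℝ)) * ∑ i, φ i ⟪x i, w⟫ + lam / 2 * ‖w‖ ^ 2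

/-- The dual objective `D(α)`. -/
noncomputable def dualObj {n d : ℕ} (lam : ℝ) (x : Fin n → EuclideanSpace ℝ (Fin d))
    (φ : Fin n → ℝ → ℝ) (α : Fin n → ℝ) : ℝ :=
  (1 / (n : ℝ)) * ∑ i, -(fconj (φ i) (-(α i))) - lam / 2 * ‖wvec lam x α‖ ^ 2

/-- The SDCA trajectory: `α^(0) = α0`, `α^(t+1) = step α^(t) (idx t)`. -/
noncomputable def traj {n : ℕ} (step : (Fin n → ℝ) → Fin n → (Fin n → ℝ))
    (α0 : Fin n → ℝ) (idx : ℕ → Fin n) : ℕ → (Fin n → ℝ)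
  | 0 => α0
  | t + 1 => step (traj step α0 idx t) (idx t)

/-- Expectation over the first `t` coordinates of a uniformly random i.i.d. index
sequence, applied to a function `g` of the index sequence (which should depend
only on the first `t` indices). -/
noncomputable def ExpIdx {n : ℕ} (hn : 0 < n) (t : ℕ) (g : (ℕ → Fin n) → ℝ) : ℝ :=
  (∑ idx : Fin t → Fin n,
      g (fun k => if h : k < t then idx ⟨k, h⟩ else (⟨0, hn⟩ : Fin n))) / (n : ℝ) ^ t


private lemma conj_of_subgrad (φ : ℝ → ℝ) (a g : ℝ) (h : IsSubgrad φ a g) :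
    FiniteConj φ g ∧ fconj φ g = a * g - φ a := by
  have hb : ∀ z, z * g - φ z ≤ a * g - φ a := fun z => by nlinarith [h z]
  have hbdd : FiniteConj φ g := ⟨a * g - φ a, by rintro y ⟨z, rfl⟩; exact hb z⟩
  refine ⟨hbdd, le_antisymm (ciSup_le hb) ?_⟩
  simpa [fconj] using le_ciSup (f := fun z => z * g - φ z) hbdd a

private lemma wvec_update {n d : ℕ} (lam : ℝ) (x : Fin n → EuclideanSpace ℝ (Fin d))
    (α : Fin n → ℝ) (i : Fin n) (β : ℝ) :
    wvec lam x (Function.update α i β)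
      = wvec lam x α + ((β - α i) / (lam * (n : ℝ))) • x i := by
  have hterm : ∀ j, (Function.update α i β j) • x j
      = α j • x j + (if j = i then (β - α i) • x i else 0) := by
    intro j
    rcases eq_or_ne j i with rfl | h
    · simp [sub_smul]
    · simp [Function.update_of_ne h, h]
  have hsum : ∑ j, (Function.update α i β j) • x j
      = (∑ j, α j • x j) + (β - α i) • x i := by
    rw [Finset.sum_congr rfl (fun j _ => hterm j), Finset.sum_add_distrib,
      Finset.sum_ite_eq' Finset.univ i (fun _ => (β - α i) • x i)]
    simp
  simp only [wvec, hsum, smul_add, smul_smul]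
  rw [show 1 / (lam * (n:ℝ)) * (β - α i) = (β - α i) / (lam * (n:ℝ)) by ring]

private lemma dual_update {n d : ℕ} (lam : ℝ)
    (x : Fin n → EuclideanSpace ℝ (Fin d)) (φ : Fin n → ℝ → ℝ)
    (α : Fin n → ℝ) (i : Fin n) (β : ℝ) :
    dualObj lam x φ (Function.update α i β) - dualObj lam x φ α
      = (1 / (n : ℝ)) * (fconj (φ i) (-(α i)) - fconj (φ i) (-β))
        - lam / 2 * (2 * ((β - α i) / (lam * (n : ℝ))) * ⟪x i, wvec lam x α⟫
            + ((β - α i) / (lam * (n : ℝ)))^2 * ‖x i‖^2) := by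
  have hterm : ∀ j, -(fconj (φ j) (-(Function.update α i β j)))
      = -(fconj (φ j) (-(α j)))
        + (if j = i then fconj (φ i) (-(α i)) - fconj (φ i) (-β) else 0) := by
    intro j
    rcases eq_or_ne j i with rfl | h
    · simp; ring
    · simp [Function.update_of_ne h, h]
  have hsum : ∑ j, -(fconj (φ j) (-(Function.update α i β j)))
      = (∑ j, -(fconj (φ j) (-(α j)))) + (fconj (φ i) (-(α i)) - fconj (φ i) (-β)) := by
    rw [Finset.sum_congr rfl (fun j _ => hterm j), Finset.sum_add_distrib,
      Finset.sum_ite_eq' Finset.univ i (fun _ => fconj (φ i) (-(α i)) - fconj (φ i) (-β))]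
    simp
  set c := (β - α i) / (lam * (n : ℝ)) with hc
  have hnorm : ‖wvec lam x (Function.update α i β)‖^2
      = ‖wvec lam x α‖^2 + 2 * (c * ⟪x i, wvec lam x α⟫) + c^2 * ‖x i‖^2 := by
    rw [wvec_update, ← hc, @norm_add_sq_real, real_inner_smul_right, real_inner_comm,
      norm_smul]
    ring_nf
    rw [Real.norm_eq_abs, sq_abs]
  simp only [dualObj, hsum, hnorm]
  ring

/-- One-step improvement bound (key lemma, Lemma 1): the average coordinate-wise
dual improvement of a step of size `s` towards `u` is at least
`(s/n)(P(w)-D(α)) - (s/n)² G/(2λ)`. -/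
theorem key_lemma
    (n d : ℕ) (hn : 1 ≤ n)
    (x : Fin n → EuclideanSpace ℝ (Fin d))
    (φ : Fin n → ℝ → ℝ) (hconv : ∀ i, ConvexOn ℝ Set.univ (φ i))
    (lam : ℝ) (hlam : 0 < lam)
    (γ : ℝ) (hγ : 0 ≤ γ)
    (hsc : ∀ i, ∀ u v : ℝ, FiniteConj (φ i) u → FiniteConj (φ i) v →
      ∀ s ∈ Set.Icc (0 : ℝ) 1,
        fconj (φ i) (s * u + (1 - s) * v)
          ≤ s * fconj (φ i) u + (1 - s) * fconj (φ i) v - γ / 2 * s * (1 - s) * (u - v) ^ 2)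
    (α : Fin n → ℝ) (hα : Feas φ α)
    (u : Fin n → ℝ)
    (hu : ∀ i, IsSubgrad (φ i) ⟪x i, wvec lam x α⟫ (-(u i)))
    (s : ℝ) (hs0 : 0 < s) (hs1 : s ≤ 1) :
    (s / n) * (primalObj lam x φ (wvec lam x α) - dualObj lam x φ α)
        - (s / n) ^ 2 *
            ((1 / (n : ℝ)) * ∑ i, (‖x i‖ ^ 2 - γ * (1 - s) * lam * (n : ℝ) / s) * (u i - α i) ^ 2)
            / (2 * lam)
      ≤ (1 / (n : ℝ)) *
          ∑ i, (dualObj lam x φ (Function.update α i (α i + s * (u i - α i))) - dualObj lam x φ α) := by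
  have hn1 : (1:ℝ) ≤ (n:ℝ) := by exact_mod_cast hn
  have hn0 : (0:ℝ) < (n:ℝ) := by linarith
  set w := wvec lam x α with hwdef
  have hfin : ∀ i, FiniteConj (φ i) (-(u i)) := fun i => (conj_of_subgrad _ _ _ (hu i)).1
  have hval : ∀ i, fconj (φ i) (-(u i)) = ⟪x i, w⟫ * (-(u i)) - φ i ⟪x i, w⟫ :=
    fun i => (conj_of_subgrad _ _ _ (hu i)).2
  -- per-coordinate lower bound on the dual improvement
  have main : ∀ i : Fin n,
      (s/(n:ℝ)) * fconj (φ i) (-(α i)) + (s/(n:ℝ)) * φ i ⟪x i, w⟫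
        + (s/(n:ℝ)) * (α i * ⟪x i, w⟫)
        + (γ*s*(1-s)/(2*(n:ℝ))) * (u i - α i)^2
        - (s^2/(2*lam*(n:ℝ)^2)) * (‖x i‖^2 * (u i - α i)^2)
      ≤ dualObj lam x φ (Function.update α i (α i + s * (u i - α i))) - dualObj lam x φ α := by
    intro i
    have hcomb : -(α i + s * (u i - α i)) = s * (-(u i)) + (1 - s) * (-(α i)) := by ring
    have h1 : fconj (φ i) (-(α i + s * (u i - α i)))
        ≤ s * fconj (φ i) (-(u i)) + (1-s) * fconj (φ i) (-(α i))
          - γ/2*s*(1-s)*((-(u i)) - (-(α i)))^2 := by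
      rw [hcomb]
      exact hsc i _ _ (hfin i) (hα i) s ⟨le_of_lt hs0, hs1⟩
    rw [dual_update lam x φ α i]
    rw [show α i + s * (u i - α i) - α i = s * (u i - α i) by ring]
    rw [← hwdef]
    have key : (s/(n:ℝ)) * fconj (φ i) (-(α i)) + (s/(n:ℝ)) * φ i ⟪x i, w⟫
          + (s/(n:ℝ)) * (α i * ⟪x i, w⟫)
          + (γ*s*(1-s)/(2*(n:ℝ))) * (u i - α i)^2
          - (s^2/(2*lam*(n:ℝ)^2)) * (‖x i‖^2 * (u i - α i)^2)
        = (1 / (n : ℝ)) * (fconj (φ i) (-(α i))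
            - (s * fconj (φ i) (-(u i)) + (1-s) * fconj (φ i) (-(α i))
                - γ/2*s*(1-s)*((-(u i)) - (-(α i)))^2))
          - lam / 2 * (2 * ((s * (u i - α i)) / (lam * (n : ℝ))) * ⟪x i, w⟫
              + ((s * (u i - α i)) / (lam * (n : ℝ)))^2 * ‖x i‖^2) := by
      rw [hval i]
      field_simp
      ring
    rw [key]
    gcongr
  -- inner-product identity
  have hip : ∑ i, α i * ⟪x i, w⟫ = lam * (n:ℝ) * ‖w‖^2 := by
    have h1 : ∑ i, α i * ⟪x i, w⟫ = ⟪∑ i, α i • x i, w⟫ := by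
      rw [sum_inner]
      exact Finset.sum_congr rfl fun i _ => (real_inner_smul_left (x i) w (α i)).symm
    have h2 : ‖w‖^2 = (1/(lam*(n:ℝ))) * ⟪∑ i, α i • x i, w⟫ := by
      have hww : w = (1 / (lam * (n:ℝ))) • ∑ i, α i • x i := rfl
      rw [← real_inner_self_eq_norm_sq]
      nth_rewrite 1 [hww]
      rw [real_inner_smul_left]
    rw [h1, h2]
    field_simp
  have hw2 : ‖w‖^2 = (∑ i, α i * ⟪x i, w⟫) / (lam * (n:ℝ)) := by
    rw [hip]; field_simp
  -- identify the LHS with the sum of the per-coordinate lower bounds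
  have hLHS : (s / n) * (primalObj lam x φ w - dualObj lam x φ α)
        - (s / n) ^ 2 *
            ((1 / (n : ℝ)) * ∑ i, (‖x i‖ ^ 2 - γ * (1 - s) * lam * (n : ℝ) / s) * (u i - α i) ^ 2)
            / (2 * lam)
      = (1 / (n:ℝ)) * ∑ i,
          ((s/(n:ℝ)) * fconj (φ i) (-(α i)) + (s/(n:ℝ)) * φ i ⟪x i, w⟫
            + (s/(n:ℝ)) * (α i * ⟪x i, w⟫)
            + (γ*s*(1-s)/(2*(n:ℝ))) * (u i - α i)^2
            - (s^2/(2*lam*(n:ℝ)^2)) * (‖x i‖^2 * (u i - α i)^2)) := by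
    simp only [primalObj, dualObj, ← hwdef, Finset.sum_add_distrib, Finset.sum_sub_distrib,
      ← Finset.mul_sum, Finset.sum_neg_distrib, sub_mul]
    rw [hw2]
    field_simp
    ring
  rw [hLHS]
  have hsle : ∑ i, ((s/(n:ℝ)) * fconj (φ i) (-(α i)) + (s/(n:ℝ)) * φ i ⟪x i, w⟫
        + (s/(n:ℝ)) * (α i * ⟪x i, w⟫)
        + (γ*s*(1-s)/(2*(n:ℝ))) * (u i - α i)^2
        - (s^2/(2*lam*(n:ℝ)^2)) * (‖x i‖^2 * (u i - α i)^2))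
      ≤ ∑ i, (dualObj lam x φ (Function.update α i (α i + s * (u i - α i))) - dualObj lam x φ α) :=
    Finset.sum_le_sum fun i _ => main i
  have h1n : (0:ℝ) ≤ 1 / (n:ℝ) := by positivity
  exact mul_le_mul_of_nonneg_left hsle h1n
end

section
/- Recursion lemma: Let n ≥ 1 be an integer, λ, G > 0, and let (ε_t)_{t≥0} be nonnegative reals with ε_0 ≥ 0 such that for every integer t ≥ 1 and every s ∈ [0,1], ε_t ≤ (1 − s/n) ε_{t−1} + (s/n)² G/(2λ). Set t_0 = max(0, ⌈n log(2λn ε_0 / G)⌉). Then for every integer t ≥ t_0, ε_t ≤ 2G/(λ(2n + t − t_0)). -/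
/-- Recursion lemma used in the proof of Theorem 1: a sequence satisfying the
SDCA recursion `ε_t ≤ (1 - s/n) ε_{t-1} + (s/n)² G/(2λ)` for all `s ∈ [0,1]`
decays like `2G/(λ(2n + t - t₀))` after `t₀ = max(0, ⌈n log(2λn ε₀/G)⌉)` steps. -/
theorem sdca_recursion_lemma
    (n : ℕ) (hn : 1 ≤ n) (lam G : ℝ) (hlam : 0 < lam) (hG : 0 < G)
    (ε : ℕ → ℝ) (hεpos : ∀ t, 0 ≤ ε t)
    (hrec : ∀ t : ℕ, 1 ≤ t → ∀ s : ℝ, s ∈ Set.Icc (0 : ℝ) 1 →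
      ε t ≤ (1 - s / n) * ε (t - 1) + (s / n) ^ 2 * G / (2 * lam))
    (t₀ : ℤ) (ht₀ : t₀ = max 0 ⌈(n : ℝ) * Real.log (2 * lam * n * ε 0 / G)⌉)
    (t : ℕ) (ht : (t₀ : ℝ) ≤ t) :
    ε t ≤ 2 * G / (lam * (2 * n + t - t₀)) := by
  have hNpos : (0:ℝ) < (n:ℝ) := by exact_mod_cast Nat.lt_of_lt_of_le Nat.zero_lt_one hn
  have hN1 : (1:ℝ) ≤ (n:ℝ) := by exact_mod_cast hn
  set C : ℝ := G / (2 * lam) with hCdef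
  have hC : 0 < C := by positivity
  set u : ℝ := 1 / (n:ℝ) with hudef
  have hu0 : 0 < u := by positivity
  have hu1 : u ≤ 1 := by
    rw [hudef, div_le_one hNpos]; exact hN1
  have h1u : 0 ≤ 1 - u := by linarith
  -- Lemma A : geometric decay with s = 1
  have hA : ∀ k : ℕ, ε k ≤ (1 - u) ^ k * ε 0 + C * u := by
    intro k
    induction k with
    | zero =>
      simp only [pow_zero, one_mul]
      nlinarith [hεpos 0]
    | succ k ih =>
      have h1 := hrec (k+1) (by omega) 1 ⟨by norm_num, by norm_num⟩
      simp only [Nat.add_sub_cancel] at h1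
      have h2 : (1 - 1/(n:ℝ)) * ε k + (1/(n:ℝ))^2 * G / (2*lam)
          = (1 - u) * ε k + u^2 * C := by rw [hudef, hCdef]; ring
      rw [h2] at h1
      have h3 : (1 - u) * ε k ≤ (1 - u) * ((1 - u) ^ k * ε 0 + C * u) :=
        mul_le_mul_of_nonneg_left ih h1u
      calc ε (k+1) ≤ (1 - u) * ε k + u^2 * C := h1
        _ ≤ (1 - u) * ((1 - u) ^ k * ε 0 + C * u) + u^2 * C := by linarith
        _ = (1 - u) ^ (k+1) * ε 0 + C * u := by ring
  -- t₀ is nonnegative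
  have ht₀0 : 0 ≤ t₀ := ht₀ ▸ le_max_left _ _
  set T : ℕ := t₀.toNat with hTdef
  have hTcast : ((T : ℕ) : ℝ) = (t₀ : ℝ) := by
    rw [hTdef]; exact_mod_cast congrArg Int.cast (Int.toNat_of_nonneg ht₀0)
  -- Lemma B : ε T ≤ 2 * C * u
  have hB : ε T ≤ 2 * C * u := by
    have hAT := hA T
    have hkey : (1 - u) ^ T * ε 0 ≤ C * u := by
      set r : ℝ := 2 * lam * n * ε 0 / G with hrdef
      by_cases hr : r ≤ 1
      · -- then ε 0 ≤ C * u
        have hε0 : ε 0 ≤ C * u := by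
          rw [hCdef, hudef]
          rw [hrdef, div_le_one hG] at hr
          rw [div_mul_div_comm]
          rw [le_div_iff₀ (by positivity)]
          nlinarith
        calc (1 - u) ^ T * ε 0 ≤ 1 * ε 0 := by
              apply mul_le_mul_of_nonneg_right _ (hεpos 0)
              exact pow_le_one₀ h1u (by linarith)
          _ = ε 0 := one_mul _
          _ ≤ C * u := hε0
      · push_neg at hr
        have hε0pos : 0 < ε 0 := by
          by_contra h
          push_neg at h
          have : ε 0 = 0 := le_antisymm h (hεpos 0)
          rw [hrdef, this] at hr
          simp at hr; linarith
        have hlogpos : 0 < Real.log r := Real.log_pos hr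
        have hTlb : (n : ℝ) * Real.log r ≤ (T : ℝ) := by
          rw [hTcast]
          have : (⌈(n : ℝ) * Real.log r⌉ : ℝ) ≤ (t₀ : ℝ) := by
            rw [ht₀]
            exact_mod_cast le_max_right (0:ℤ) _
          exact le_trans (Int.le_ceil _) this
        have hpow : (1 - u) ^ T ≤ Real.exp (-(T : ℝ) * u) := by
          have hstep : 1 - u ≤ Real.exp (-u) := by
            have := Real.add_one_le_exp (-u); linarith
          calc (1 - u) ^ T ≤ (Real.exp (-u)) ^ T := pow_le_pow_left₀ h1u hstep T
            _ = Real.exp ((T : ℝ) * (-u)) := by rw [← Real.exp_nat_mul]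
            _ = Real.exp (-(T : ℝ) * u) := by ring_nf
        have hexp : Real.exp (-(T : ℝ) * u) ≤ 1 / r := by
          have h1 : Real.log r ≤ (T : ℝ) * u := by
            rw [hudef]
            rw [← sub_nonneg]
            have : (T:ℝ) * (1/(n:ℝ)) - Real.log r = ((T:ℝ) - (n:ℝ) * Real.log r) / n := by
              field_simp
            rw [this]
            apply div_nonneg _ hNpos.le
            linarith
          calc Real.exp (-(T : ℝ) * u) ≤ Real.exp (- Real.log r) := by
                apply Real.exp_le_exp.mpr; linarith
            _ = 1 / r := by
                rw [Real.exp_neg, Real.exp_log (by linarith : (0:ℝ) < r)]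
                rw [one_div]
        have hrε : (1 / r) * ε 0 = C * u := by
          rw [hrdef, hCdef, hudef]
          field_simp
        calc (1 - u) ^ T * ε 0 ≤ (1 / r) * ε 0 := by
              apply mul_le_mul_of_nonneg_right _ (hεpos 0)
              exact le_trans hpow hexp
          _ = C * u := hrε
    calc ε T ≤ (1 - u) ^ T * ε 0 + C * u := hAT
      _ ≤ C * u + C * u := by linarith
      _ = 2 * C * u := by ring
  -- Main induction
  have hC' : ∀ k : ℕ, ε (T + k) ≤ 4 * C / (2 * (n:ℝ) + k) := by
    intro k
    induction k with
    | zero =>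
      simp only [Nat.add_zero, Nat.cast_zero, add_zero]
      have : 2 * C * u = 4 * C / (2 * (n:ℝ)) := by
        rw [hudef]; field_simp; ring
      linarith [hB, this ▸ hB]
    | succ k ih =>
      set a : ℝ := 2 * (n:ℝ) + k with hadef
      have ha2 : 2 ≤ a := by
        have : (0:ℝ) ≤ (k:ℝ) := Nat.cast_nonneg k
        rw [hadef]; linarith
      have ha0 : 0 < a := by linarith
      have hs01 : (2 * (n:ℝ) / a) ∈ Set.Icc (0:ℝ) 1 := by
        constructor
        · positivity
        · rw [div_le_one ha0]
          have : (0:ℝ) ≤ (k:ℝ) := Nat.cast_nonneg k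
          rw [hadef]; linarith
      have h1 := hrec (T + k + 1) (by omega) (2 * (n:ℝ) / a) hs01
      simp only [Nat.add_sub_cancel] at h1
      have hsn : (2 * (n:ℝ) / a) / (n:ℝ) = 2 / a := by
        field_simp
      rw [hsn] at h1
      have hGC : (2 / a) ^ 2 * G / (2 * lam) = (2/a)^2 * C := by
        rw [hCdef]; ring
      rw [hGC] at h1
      have h2a : 0 ≤ 1 - 2 / a := by
        rw [sub_nonneg, div_le_one ha0]; linarith
      have h3 : (1 - 2/a) * ε (T + k) ≤ (1 - 2/a) * (4 * C / a) :=
        mul_le_mul_of_nonneg_left ih h2a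
      have hkey : (1 - 2/a) * (4 * C / a) + (2/a)^2 * C ≤ 4 * C / (a + 1) := by
        have heq : (1 - 2/a) * (4 * C / a) + (2/a)^2 * C = 4 * C * (a - 1) / a^2 := by
          field_simp; ring
        rw [heq, div_le_div_iff₀ (by positivity) (by linarith)]
        nlinarith [hC.le]
      have hcast : (2 * (n:ℝ) + ((k:ℕ)+1 : ℕ)) = a + 1 := by
        rw [hadef]; push_cast; ring
      have : ε (T + (k+1)) ≤ 4 * C / (a + 1) := by
        have hTk : T + (k+1) = T + k + 1 := by omega
        rw [hTk]
        calc ε (T + k + 1) ≤ (1 - 2/a) * ε (T + k) + (2/a)^2 * C := h1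
          _ ≤ (1 - 2/a) * (4 * C / a) + (2/a)^2 * C := by linarith
          _ ≤ 4 * C / (a + 1) := hkey
      rw [hcast]
      exact this
  -- translate
  have hTt : T ≤ t := by
    have : ((T:ℕ):ℝ) ≤ (t:ℝ) := by rw [hTcast]; exact ht
    exact_mod_cast this
  obtain ⟨k, hk⟩ : ∃ k, t = T + k := ⟨t - T, by omega⟩
  have hmain := hC' k
  rw [← hk] at hmain
  have hden : lam * (2 * (n:ℝ) + (t:ℝ) - (t₀:ℝ)) = lam * (2 * (n:ℝ) + k) := by
    have : (t:ℝ) = (T:ℝ) + k := by rw [hk]; push_cast; ring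
    rw [this, ← hTcast]; ring
  have hrw : 2 * G / (lam * (2 * (n:ℝ) + (t:ℝ) - (t₀:ℝ))) = 4 * C / (2 * (n:ℝ) + k) := by
    rw [hden, hCdef]
    have hd : 0 < 2 * (n:ℝ) + k := by positivity
    field_simp
    ring
  rw [hrw]
  exact hmain
end

section
/- SDCA convergence for Lipschitz losses (Theorem 1): Assume each φ_i is L-Lipschitz, together with the standing assumptions, and run the SDCA process with α^(0) = 0. Let ε_P > 0, and let T_0, T be integers with T_0 ≥ max(0, ⌈n log(λn/(2L²))⌉) + 16L²/(λ ε_P) and T − T_0 ≥ n + 4L²/(λ ε_P). Let ᾱ = (1/(T−T_0))∑_{t=T_0+1}^{T} α^(t−1) and w̄ = w(ᾱ) (or, alternatively, ᾱ = α^(t), w̄ = w^(t) for t drawn uniformly from {T_0+1,…,T}, with the expectation also over this t). Then E[P(w̄) − D(ᾱ)] ≤ ε_P. Moreover, for every t ≥ T_0, E[D(α*) − D(α^(t))] ≤ ε_P/2. -/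
open scoped BigOperators RealInnerProductSpace
open Finset

namespace SDCAaux
set_option maxHeartbeats 1000000


lemma fconj_le {φ : ℝ → ℝ} {u c : ℝ} (h : ∀ z, z * u - φ z ≤ c) : fconj φ u ≤ c :=
  ciSup_le h

lemma le_fconj {φ : ℝ → ℝ} {u : ℝ} (h : FiniteConj φ u) (z : ℝ) :
    z * u - φ z ≤ fconj φ u := le_ciSup h z

lemma finiteConj_of_ub {φ : ℝ → ℝ} {u c : ℝ} (h : ∀ z, z * u - φ z ≤ c) :
    FiniteConj φ u := ⟨c, by rintro y ⟨z, rfl⟩; exact h z⟩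

/-- Fenchel–Young equality at a subgradient: `φ*(g) = a*g - φ a`, and finiteness. -/
lemma fconj_subgrad {φ : ℝ → ℝ} {a g : ℝ} (hg : IsSubgrad φ a g) :
    FiniteConj φ g ∧ fconj φ g = a * g - φ a := by
  have hub : ∀ z, z * g - φ z ≤ a * g - φ a := by
    intro z
    have := hg z
    nlinarith
  have hfin : FiniteConj φ g := finiteConj_of_ub hub
  refine ⟨hfin, le_antisymm (fconj_le hub) ?_⟩
  simpa using le_fconj hfin a

/-- `|u| ≤ L` whenever `φ*(u)` is finite and `φ` is `L`-Lipschitz. -/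
lemma abs_le_of_finiteConj {φ : ℝ → ℝ} {u L : ℝ}
    (hL : ∀ a b : ℝ, |φ a - φ b| ≤ L * |a - b|) (h : FiniteConj φ u) : |u| ≤ L := by
  obtain ⟨c, hc⟩ := h
  by_contra hgt
  push_neg at hgt
  have hden : 0 < |u| - L := sub_pos.2 hgt
  set M : ℝ := |(c + φ 0 + 1) / (|u| - L)| + 1 with hM
  have hMpos : 0 < M := by positivity
  have hM1 : (c + φ 0 + 1) / (|u| - L) < M := lt_of_le_of_lt (le_abs_self _) (by simp [hM])
  have hM2 : c + φ 0 + 1 < M * (|u| - L) := by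
    rw [div_lt_iff₀ hden] at hM1; linarith
  set z : ℝ := if 0 ≤ u then M else -M with hz
  have hzu : z * u = M * |u| := by
    rcases le_or_gt 0 u with h0 | h0
    · simp [hz, h0, abs_of_nonneg h0]
    · simp only [hz, if_neg (not_le.2 h0), abs_of_neg h0]; ring
  have hzabs : |z| = M := by
    rcases le_or_gt 0 u with h0 | h0 <;>
      simp [hz, h0, abs_of_nonneg hMpos.le, not_le.2, abs_of_neg, hMpos]
  have hφz : φ z ≤ φ 0 + L * M := by
    have h1 : φ z - φ 0 ≤ L * M := by
      calc φ z - φ 0 ≤ |φ z - φ 0| := le_abs_self _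
        _ ≤ L * |z - 0| := hL z 0
        _ = L * M := by rw [sub_zero, hzabs]
    linarith
  have hmem : z * u - φ z ≤ c := hc ⟨z, rfl⟩
  nlinarith

/-- Existence of a subgradient for a convex function, bounded by the Lipschitz constant. -/
lemma exists_subgrad {φ : ℝ → ℝ} {L : ℝ} (hconv : ConvexOn ℝ Set.univ φ)
    (hL : ∀ a b : ℝ, |φ a - φ b| ≤ L * |a - b|) (a : ℝ) :
    ∃ g, IsSubgrad φ a g ∧ |g| ≤ L := by
  set S : Set ℝ := (fun z => (φ a - φ z) / (a - z)) '' Set.Iio a with hS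
  have hne : S.Nonempty := ⟨(φ a - φ (a-1)) / (a - (a-1)), ⟨a - 1, by norm_num, rfl⟩⟩
  have hslope_le : ∀ s ∈ S, s ≤ L := by
    rintro s ⟨z, hz, rfl⟩
    have hzlt : z < a := hz
    have hz' : 0 < a - z := sub_pos.2 hzlt
    rw [div_le_iff₀ hz']
    calc φ a - φ z ≤ |φ a - φ z| := le_abs_self _
      _ ≤ L * |a - z| := hL a z
      _ = L * (a - z) := by rw [abs_of_pos hz']
  have hbdd : BddAbove S := ⟨L, hslope_le⟩
  set g : ℝ := sSup S with hg
  have hgL : g ≤ L := csSup_le hne hslope_le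
  have hgLb : -L ≤ g := by
    refine le_csSup_of_le hbdd (Set.mem_image_of_mem _ (by norm_num : a - 1 ∈ Set.Iio a)) ?_
    have h1 : |φ a - φ (a-1)| ≤ L * 1 := by simpa using hL a (a-1)
    have : -(L*1) ≤ φ a - φ (a-1) := neg_le_of_abs_le h1
    simp only [show a - (a-1) = 1 by ring, div_one]
    linarith
  -- subgradient property
  have hsub : IsSubgrad φ a g := by
    intro b
    rcases lt_trichotomy b a with hba | rfl | hab
    · -- b < a : slope (b,a) ∈ S so slope ≤ g; g*(b-a) ≤ φ b - φ a
      have hmem : (φ a - φ b) / (a - b) ∈ S := Set.mem_image_of_mem _ hba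
      have hle : (φ a - φ b) / (a - b) ≤ g := le_csSup hbdd hmem
      have hab' : 0 < a - b := sub_pos.2 hba
      have : φ a - φ b ≤ g * (a - b) := by
        rw [div_le_iff₀ hab'] at hle; linarith
      nlinarith
    · simp
    · -- a < b : every element of S ≤ slope (a, b)
      have hub : g ≤ (φ b - φ a) / (b - a) := by
        refine csSup_le hne ?_
        rintro s ⟨z, hz, rfl⟩
        have h3 := hconv.slope_mono_adjacent (Set.mem_univ z) (Set.mem_univ b) hz hab
        have hzlt : z < a := hz
        have hza : 0 < a - z := sub_pos.2 hzlt
        have hab' : 0 < b - a := sub_pos.2 hab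
        -- slope f z a ≤ slope f a b
        have : (φ a - φ z) / (a - z) ≤ (φ b - φ a) / (b - a) := h3
        exact this
      have hab' : 0 < b - a := sub_pos.2 hab
      have : g * (b - a) ≤ φ b - φ a := by
        rw [le_div_iff₀ hab'] at hub; linarith
      linarith
  exact ⟨g, hsub, abs_le.2 ⟨hgLb, hgL⟩⟩

/-- Jensen for the conjugate: convex combinations of finite points stay finite,
with the convexity inequality. -/
lemma fconj_sum_le {φ : ℝ → ℝ} {ι : Type*} (s : Finset ι) (w : ι → ℝ) (b : ι → ℝ)
    (hw : ∀ i ∈ s, 0 ≤ w i) (hw1 : ∑ i ∈ s, w i = 1)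
    (hfin : ∀ i ∈ s, FiniteConj φ (b i)) :
    FiniteConj φ (∑ i ∈ s, w i * b i) ∧
      fconj φ (∑ i ∈ s, w i * b i) ≤ ∑ i ∈ s, w i * fconj φ (b i) := by
  have key : ∀ z, z * (∑ i ∈ s, w i * b i) - φ z ≤ ∑ i ∈ s, w i * fconj φ (b i) := by
    intro z
    have h1 : z * (∑ i ∈ s, w i * b i) - φ z
        = ∑ i ∈ s, w i * (z * b i - φ z) := by
      have h2 : ∑ i ∈ s, w i * (z * b i - φ z)
          = ∑ i ∈ s, (z * (w i * b i)) - ∑ i ∈ s, (w i * φ z) := by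
        rw [← Finset.sum_sub_distrib]
        exact Finset.sum_congr rfl fun i _ => by ring
      rw [h2, ← Finset.mul_sum, ← Finset.sum_mul, hw1, one_mul]
    rw [h1]
    refine Finset.sum_le_sum fun i hi => ?_
    have := le_fconj (hfin i hi) z
    nlinarith [hw i hi]
  exact ⟨finiteConj_of_ub key, fconj_le key⟩


/-- binary convex combination stays in the domain of the conjugate. -/
lemma fconj_comb {φ : ℝ → ℝ} {b₁ b₂ θ : ℝ} (h0 : 0 ≤ θ) (h1 : θ ≤ 1)
    (hf1 : FiniteConj φ b₁) (hf2 : FiniteConj φ b₂) :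
    FiniteConj φ ((1 - θ) * b₁ + θ * b₂) ∧
      fconj φ ((1 - θ) * b₁ + θ * b₂) ≤ (1 - θ) * fconj φ b₁ + θ * fconj φ b₂ := by
  have key : ∀ z, z * ((1 - θ) * b₁ + θ * b₂) - φ z
      ≤ (1 - θ) * fconj φ b₁ + θ * fconj φ b₂ := by
    intro z
    have e1 := le_fconj hf1 z
    have e2 := le_fconj hf2 z
    nlinarith
  exact ⟨finiteConj_of_ub key, fconj_le key⟩


lemma inner_wvec_left {n d : ℕ} (x : Fin n → EuclideanSpace ℝ (Fin d)) (lam : ℝ) (β : Fin n → ℝ) (w' : EuclideanSpace ℝ (Fin d)) :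
    ⟪wvec lam x β, w'⟫ = (1 / (lam * n)) * ∑ i, β i * ⟪x i, w'⟫ := by
  rw [wvec, real_inner_smul_left, sum_inner]
  congr 1
  exact Finset.sum_congr rfl fun i _ => real_inner_smul_left _ _ _

lemma sum_beta_inner {n d : ℕ} (x : Fin n → EuclideanSpace ℝ (Fin d)) (lam : ℝ) (hlam : lam ≠ 0) (hn : (n : ℝ) ≠ 0) (β : Fin n → ℝ)
    (w' : EuclideanSpace ℝ (Fin d)) :
    (1 / n) * ∑ i, β i * ⟪x i, w'⟫ = lam * ⟪wvec lam x β, w'⟫ := by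
  rw [inner_wvec_left]
  field_simp

lemma weak_duality {n d : ℕ} (x : Fin n → EuclideanSpace ℝ (Fin d)) (φ : Fin n → ℝ → ℝ)
    {lam : ℝ} (hlam : 0 < lam) (hn : (n : ℝ) ≠ 0)
    {β : Fin n → ℝ} (hβ : Feas φ β) (w : EuclideanSpace ℝ (Fin d)) :
    dualObj lam x φ β ≤ primalObj lam x φ w := by
  set wβ := wvec lam x β with hwβ
  have h1 : ∀ i, -(fconj (φ i) (-(β i))) ≤ φ i ⟪x i, w⟫ + β i * ⟪x i, w⟫ := by
    intro i
    have := le_fconj (hβ i) ⟪x i, w⟫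
    nlinarith
  have h2 : (1 / (n:ℝ)) * ∑ i, -(fconj (φ i) (-(β i)))
      ≤ (1 / (n:ℝ)) * ∑ i, φ i ⟪x i, w⟫ + lam * ⟪wβ, w⟫ := by
    have hsum : ∑ i, -(fconj (φ i) (-(β i)))
        ≤ ∑ i, (φ i ⟪x i, w⟫ + β i * ⟪x i, w⟫) := Finset.sum_le_sum fun i _ => h1 i
    have hpos : (0:ℝ) < (n:ℝ) := lt_of_le_of_ne (Nat.cast_nonneg n) (Ne.symm hn)
    have hmul := mul_le_mul_of_nonneg_left hsum (le_of_lt (by positivity : (0:ℝ) < 1/(n:ℝ)))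
    have hsplit : (1/(n:ℝ)) * ∑ i, (φ i ⟪x i, w⟫ + β i * ⟪x i, w⟫)
        = (1/(n:ℝ)) * ∑ i, φ i ⟪x i, w⟫ + (1/(n:ℝ)) * ∑ i, β i * ⟪x i, w⟫ := by
      rw [Finset.sum_add_distrib, mul_add]
    rw [hsplit, sum_beta_inner x lam (ne_of_gt hlam) hn] at hmul
    exact hmul
  have h3 : lam * ⟪wβ, w⟫ - lam/2 * ‖wβ‖^2 ≤ lam/2 * ‖w‖^2 := by
    have hexp : ‖w - wβ‖^2 = ‖w‖^2 - 2 * ⟪w, wβ⟫ + ‖wβ‖^2 := norm_sub_sq_real w wβ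
    have hnn : (0:ℝ) ≤ ‖w - wβ‖^2 := by positivity
    have hcomm : ⟪wβ, w⟫ = ⟪w, wβ⟫ := real_inner_comm _ _
    nlinarith
  rw [dualObj, primalObj, ← hwβ]
  linarith [h2, h3]


lemma coord_gain {n d : ℕ} (hn : 0 < n) (x : Fin n → EuclideanSpace ℝ (Fin d))
    (φ : Fin n → ℝ → ℝ) {lam : ℝ} (hlam : 0 < lam) {L : ℝ}
    (hconv : ∀ i, ConvexOn ℝ Set.univ (φ i))
    (hL : ∀ i, ∀ a b : ℝ, |φ i a - φ i b| ≤ L * |a - b|)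
    (hx : ∀ i, ‖x i‖ ≤ 1)
    (step : (Fin n → ℝ) → Fin n → (Fin n → ℝ))
    (hstep_max : ∀ α i c, Feas φ (Function.update α i c) →
      dualObj lam x φ (Function.update α i c) ≤ dualObj lam x φ (step α i))
    {α : Fin n → ℝ} (hfeas : Feas φ α) {s : ℝ} (hs0 : 0 < s) (hs1 : s ≤ 1) (i : Fin n) :
    (s/(n:ℝ)) * (φ i ⟪x i, wvec lam x α⟫ + fconj (φ i) (-(α i))
        + ⟪x i, wvec lam x α⟫ * α i) - s^2 * (2*L^2) / (lam * (n:ℝ)^2)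
      ≤ dualObj lam x φ (step α i) - dualObj lam x φ α := by
  have hN : (0:ℝ) < (n:ℝ) := Nat.cast_pos.2 hn
  set w := wvec lam x α with hw
  set a : ℝ := ⟪x i, w⟫ with ha
  obtain ⟨g, hg, hgL⟩ := exists_subgrad (hconv i) (hL i) a
  obtain ⟨hfing, hvalg⟩ := fconj_subgrad hg
  set c : ℝ := (1 - s) * α i + s * (-g) with hc
  have hcE : -c = (1 - s) * (-(α i)) + s * g := by rw [hc]; ring
  have hcomb := fconj_comb (le_of_lt hs0) hs1 (hfeas i) hfing
  set β := Function.update α i c with hβ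
  have hfeasβ : Feas φ β := by
    intro j
    by_cases hj : j = i
    · subst hj; rw [hβ, Function.update_self, hcE]; exact hcomb.1
    · rw [hβ, Function.update_of_ne hj]; exact hfeas j
  have hD : dualObj lam x φ β ≤ dualObj lam x φ (step α i) := hstep_max α i c hfeasβ
  set K : ℝ := fconj (φ i) (-(α i)) with hK
  set A : ℝ := fconj (φ i) (-c) with hA
  set Φ : ℝ := φ i a with hΦ
  set X : ℝ := ‖x i‖^2 with hX
  set r : ℝ := s * (-g - α i) / (lam * (n:ℝ)) with hr
  -- sum part
  have hsumβ : ∑ j, -(fconj (φ j) (-(β j))) = (∑ j, -(fconj (φ j) (-(α j)))) + (K - A) := by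
    have h1 : ∀ γ : Fin n → ℝ, ∑ j, -(fconj (φ j) (-(γ j)))
        = -(fconj (φ i) (-(γ i))) + ∑ j ∈ Finset.univ.erase i, -(fconj (φ j) (-(γ j))) :=
      fun γ => (Finset.add_sum_erase _ _ (Finset.mem_univ i)).symm
    have h2 : ∑ j ∈ Finset.univ.erase i, -(fconj (φ j) (-(β j)))
        = ∑ j ∈ Finset.univ.erase i, -(fconj (φ j) (-(α j))) := by
      refine Finset.sum_congr rfl fun j hj => ?_
      rw [hβ, Function.update_of_ne (Finset.mem_erase.1 hj).1]
    rw [h1 β, h1 α, h2, hβ, Function.update_self]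
    ring
  -- vector part
  have hwβ : wvec lam x β = w + ((c - α i) / (lam * (n:ℝ))) • x i := by
    have h1 : ∀ γ : Fin n → ℝ, ∑ j, γ j • x j
        = γ i • x i + ∑ j ∈ Finset.univ.erase i, γ j • x j :=
      fun γ => (Finset.add_sum_erase _ _ (Finset.mem_univ i)).symm
    have h2 : ∑ j ∈ Finset.univ.erase i, β j • x j
        = ∑ j ∈ Finset.univ.erase i, α j • x j := by
      refine Finset.sum_congr rfl fun j hj => ?_
      rw [hβ, Function.update_of_ne (Finset.mem_erase.1 hj).1]
    have h3 : ∑ j, β j • x j = (∑ j, α j • x j) + (c - α i) • x i := by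
      rw [h1 β, h1 α, h2, hβ, Function.update_self, sub_smul]
      abel
    rw [wvec, h3, smul_add, ← wvec, ← hw, smul_smul]
    congr 2
    field_simp
  have hnorm : ‖wvec lam x β‖^2 = ‖w‖^2 + 2*((c - α i)/(lam*(n:ℝ)))*a
      + ((c - α i)/(lam*(n:ℝ)))^2 * X := by
    rw [hwβ, norm_add_sq_real, real_inner_smul_right, norm_smul, Real.norm_eq_abs,
      mul_pow, sq_abs]
    simp only [ha, hX]
    rw [real_inner_comm (x i) w]
    ring
  -- conjugate inequality
  have hconj : A ≤ (1 - s) * K + s * (a * g - Φ) := by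
    have h6 := hcomb.2
    rw [hvalg] at h6
    rw [hA, hcE]
    exact h6
  -- dual difference identity
  have heq : dualObj lam x φ β = dualObj lam x φ α + (1/(n:ℝ))*(K - A)
      - lam/2*(2*r*a + r^2*X) := by
    have hca : c - α i = s * (-g - α i) := by rw [hc]; ring
    simp only [dualObj, hsumβ, hnorm, ← hw]
    rw [hca, ← hr]
    ring
  -- bounds
  have habs : |α i| ≤ L := by
    have := abs_le_of_finiteConj (hL i) (hfeas i)
    rwa [abs_neg] at this
  have hX0 : (0:ℝ) ≤ X := by rw [hX]; positivity
  have hX1 : X ≤ 1 := by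
    rw [hX]
    nlinarith [hx i, norm_nonneg (x i)]
  have h4 : (g + α i)^2 ≤ 4*L^2 := by
    have := abs_le.1 hgL
    have := abs_le.1 habs
    nlinarith
  have hr2 : lam/2*(2*r*a + r^2*X)
      = s*(-g - α i)*a/(n:ℝ) + s^2*(g + α i)^2*X/(2*lam*(n:ℝ)^2) := by
    rw [hr]
    field_simp
    ring
  have hXb : s^2*(g + α i)^2*X/(2*lam*(n:ℝ)^2) ≤ s^2 * (2*L^2) / (lam*(n:ℝ)^2) := by
    have t1 : s^2*(g + α i)^2*X ≤ s^2*(g + α i)^2*1 :=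
      mul_le_mul_of_nonneg_left hX1 (by positivity)
    have t2 : s^2*(g + α i)^2 ≤ s^2*(4*L^2) := mul_le_mul_of_nonneg_left h4 (by positivity)
    have hnum : s^2*(g + α i)^2*X ≤ s^2*(4*L^2) := by linarith
    calc s^2*(g + α i)^2*X/(2*lam*(n:ℝ)^2) ≤ s^2*(4*L^2)/(2*lam*(n:ℝ)^2) := by
          gcongr
      _ = s^2 * (2*L^2) / (lam*(n:ℝ)^2) := by field_simp; ring
  have hAK : (s/(n:ℝ)) * (K - (a*g - Φ)) ≤ (1/(n:ℝ))*(K - A) := by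
    have h5 : s * (K - (a*g - Φ)) ≤ K - A := by nlinarith
    calc (s/(n:ℝ)) * (K - (a*g - Φ)) = (1/(n:ℝ)) * (s * (K - (a*g - Φ))) := by ring
      _ ≤ (1/(n:ℝ))*(K - A) := by
          have : (0:ℝ) ≤ 1/(n:ℝ) := by positivity
          exact mul_le_mul_of_nonneg_left h5 this
  have hfinal : (s/(n:ℝ))*(K - (a*g - Φ)) - s*(-g - α i)*a/(n:ℝ)
      = (s/(n:ℝ))*(Φ + K + a*(α i)) := by field_simp; ring
  have hgoal : (s/(n:ℝ)) * (Φ + K + a * α i) - s^2 * (2*L^2) / (lam * (n:ℝ)^2)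
      ≤ dualObj lam x φ β - dualObj lam x φ α := by
    rw [heq]
    have := hXb
    have := hAK
    have := hr2
    linarith [hfinal ▸ (by linarith [hAK, hXb, hr2] :
      (s/(n:ℝ))*(K - (a*g - Φ)) - s*(-g - α i)*a/(n:ℝ) - s^2 * (2*L^2) / (lam*(n:ℝ)^2)
        ≤ (1/(n:ℝ))*(K - A) - lam/2*(2*r*a + r^2*X))]
  calc (s/(n:ℝ)) * (φ i ⟪x i, wvec lam x α⟫ + fconj (φ i) (-(α i))
        + ⟪x i, wvec lam x α⟫ * α i) - s^2 * (2*L^2) / (lam * (n:ℝ)^2)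
      = (s/(n:ℝ)) * (Φ + K + a * α i) - s^2 * (2*L^2) / (lam * (n:ℝ)^2) := by
        simp only [hΦ, hK, ha, hw]
    _ ≤ dualObj lam x φ β - dualObj lam x φ α := hgoal
    _ ≤ dualObj lam x φ (step α i) - dualObj lam x φ α := by linarith [hD]





lemma expIdx_mono (hn : 0 < n) {t : ℕ} {g h : (ℕ → Fin n) → ℝ}
    (hle : ∀ idx, g idx ≤ h idx) : ExpIdx hn t g ≤ ExpIdx hn t h := by
  have hp : (0:ℝ) < (n:ℝ)^t := by
    have : (0:ℝ) < (n:ℝ) := Nat.cast_pos.2 hn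
    positivity
  exact (div_le_div_iff_of_pos_right hp).2 (Finset.sum_le_sum fun p _ => hle _)

lemma card_fun_fin (hn : 0 < n) (t : ℕ) :
    (Fintype.card (Fin t → Fin n) : ℝ) = (n:ℝ)^t := by
  simp [Fintype.card_fun]

lemma expIdx_const (hn : 0 < n) (t : ℕ) (c : ℝ) : ExpIdx hn t (fun _ => c) = c := by
  have hp : ((n:ℝ))^t ≠ 0 := by
    have : (0:ℝ) < (n:ℝ) := Nat.cast_pos.2 hn
    positivity
  rw [ExpIdx, Finset.sum_const, nsmul_eq_mul]
  rw [Finset.card_univ]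
  rw [card_fun_fin hn]
  field_simp

lemma expIdx_add (hn : 0 < n) (t : ℕ) (g h : (ℕ → Fin n) → ℝ) :
    ExpIdx hn t (fun idx => g idx + h idx) = ExpIdx hn t g + ExpIdx hn t h := by
  rw [ExpIdx, ExpIdx, ExpIdx, Finset.sum_add_distrib, add_div]

lemma expIdx_smul (hn : 0 < n) (t : ℕ) (c : ℝ) (g : (ℕ → Fin n) → ℝ) :
    ExpIdx hn t (fun idx => c * g idx) = c * ExpIdx hn t g := by
  rw [ExpIdx, ExpIdx, ← Finset.mul_sum, mul_div_assoc]

lemma expIdx_sub (hn : 0 < n) (t : ℕ) (g h : (ℕ → Fin n) → ℝ) :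
    ExpIdx hn t (fun idx => g idx - h idx) = ExpIdx hn t g - ExpIdx hn t h := by
  rw [ExpIdx, ExpIdx, ExpIdx, Finset.sum_sub_distrib, sub_div]

lemma expIdx_finsum (hn : 0 < n) (t : ℕ) {ι : Type*} (S : Finset ι)
    (F : ι → (ℕ → Fin n) → ℝ) :
    ExpIdx hn t (fun idx => ∑ k ∈ S, F k idx) = ∑ k ∈ S, ExpIdx hn t (F k) := by
  rw [ExpIdx, Finset.sum_comm, Finset.sum_div]
  rfl

/-- splitting off the last coordinate of a `Fin (t+1)`-indexed sum. -/
lemma sum_split {t : ℕ} (f : (Fin (t+1) → Fin n) → ℝ) :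
    ∑ q : Fin (t+1) → Fin n, f q
      = ∑ p : Fin t → Fin n, ∑ j : Fin n, f (Fin.snoc p j) := by
  have h1 : ∑ q : Fin (t+1) → Fin n, f q
      = ∑ pr : Fin n × (Fin t → Fin n), f (Fin.snocEquiv (fun _ => Fin n) pr) :=
    (Equiv.sum_comp (Fin.snocEquiv (fun _ => Fin n)) f).symm
  rw [h1, Fintype.sum_prod_type_right]
  rfl

lemma ext_snoc (hn : 0 < n) (t : ℕ) (p : Fin t → Fin n) (j : Fin n) :
    (fun k => if h : k < t+1 then (Fin.snoc p j : Fin (t+1) → Fin n) ⟨k, h⟩ else (⟨0, hn⟩ : Fin n))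
      = fun k => if k = t then j
          else (if h : k < t then p ⟨k, h⟩ else (⟨0, hn⟩ : Fin n)) := by
  funext k
  rcases lt_trichotomy k t with hk | hk | hk
  · have hk1 : k < t + 1 := Nat.lt_succ_of_lt hk
    have hne : k ≠ t := ne_of_lt hk
    rw [dif_pos hk1, if_neg hne, dif_pos hk]
    have he : (⟨k, hk1⟩ : Fin (t+1)) = Fin.castSucc ⟨k, hk⟩ := by
      simp [Fin.castSucc, Fin.castAdd, Fin.castLE, Fin.ext_iff]
    rw [he, Fin.snoc_castSucc]
  · subst hk
    have hk1 : k < k + 1 := Nat.lt_succ_self k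
    rw [dif_pos hk1, if_pos rfl]
    have he : (⟨k, hk1⟩ : Fin (k+1)) = Fin.last k := by simp [Fin.last, Fin.ext_iff]
    rw [he, Fin.snoc_last]
  · have hk1 : ¬ (k < t + 1) := by omega
    have hne : k ≠ t := ne_of_gt hk
    have hk2 : ¬ (k < t) := by omega
    rw [dif_neg hk1, if_neg hne, dif_neg hk2]

/-- Tower rule: integrate out the last index. -/
lemma expIdx_succ (hn : 0 < n) (t : ℕ) (G : (ℕ → Fin n) → ℝ) :
    ExpIdx hn (t+1) G
      = ExpIdx hn t (fun idx => (∑ j : Fin n, G (fun k => if k = t then j else idx k)) / n) := by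
  have hA : ExpIdx hn t (fun idx => (∑ j : Fin n, G (fun k => if k = t then j else idx k)) / n)
      = (∑ p : Fin t → Fin n, (∑ j : Fin n, G (fun k => if k = t then j
          else (if h : k < t then p ⟨k, h⟩ else (⟨0, hn⟩ : Fin n)))) / (n:ℝ)) / (n:ℝ)^t := rfl
  have hp : ((n:ℝ))^(t+1) = (n:ℝ) * (n:ℝ)^t := by ring
  rw [hA, ExpIdx, sum_split, ← Finset.sum_div, div_div, hp]
  congr 1
  refine Finset.sum_congr rfl fun p _ => Finset.sum_congr rfl fun j _ => ?_
  rw [ext_snoc hn]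

/-- A function not depending on index `t` has the same expectation at `t+1`. -/
lemma expIdx_succ_invariant (hn : 0 < n) (t : ℕ) (G : (ℕ → Fin n) → ℝ)
    (hG : ∀ idx j, G (fun k => if k = t then j else idx k) = G idx) :
    ExpIdx hn (t+1) G = ExpIdx hn t G := by
  rw [expIdx_succ hn t G]
  congr 1
  funext idx
  rw [Finset.sum_congr rfl fun j _ => hG idx j, Finset.sum_const, nsmul_eq_mul,
    Finset.card_univ, Fintype.card_fin]
  field_simp

lemma traj_congr {step : (Fin n → ℝ) → Fin n → (Fin n → ℝ)} {α0 : Fin n → ℝ}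
    {idx idx' : ℕ → Fin n} : ∀ {t : ℕ}, (∀ k < t, idx k = idx' k) →
    traj step α0 idx t = traj step α0 idx' t
  | 0, _ => rfl
  | t + 1, h => by
    have h1 : traj step α0 idx t = traj step α0 idx' t :=
      traj_congr fun k hk => h k (Nat.lt_succ_of_lt hk)
    simp only [traj, h1, h t (Nat.lt_succ_self t)]

lemma traj_modified {step : (Fin n → ℝ) → Fin n → (Fin n → ℝ)} {α0 : Fin n → ℝ}
    {idx : ℕ → Fin n} {t u : ℕ} (hut : u ≤ t) (j : Fin n) :
    traj step α0 (fun k => if k = t then j else idx k) u = traj step α0 idx u :=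
  traj_congr fun k hk => if_neg (by omega)

/-- Tower rule for the trajectory. -/
lemma expIdx_traj_succ (hn : 0 < n) (step : (Fin n → ℝ) → Fin n → (Fin n → ℝ))
    (α0 : Fin n → ℝ) (t : ℕ) (f : (Fin n → ℝ) → ℝ) :
    ExpIdx hn (t+1) (fun idx => f (traj step α0 idx (t+1)))
      = ExpIdx hn t (fun idx => (∑ j : Fin n, f (step (traj step α0 idx t) j)) / n) := by
  rw [expIdx_succ hn t]
  congr 1
  funext idx
  congr 1
  refine Finset.sum_congr rfl fun j _ => ?_
  simp only [traj]
  rw [traj_modified (le_refl t) j]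
  simp

/-- Quantities depending only on the trajectory up to time `t` can be computed with
`ExpIdx` at any later horizon. -/
lemma expIdx_traj_of_le (hn : 0 < n) (step : (Fin n → ℝ) → Fin n → (Fin n → ℝ))
    (α0 : Fin n → ℝ) (f : (Fin n → ℝ) → ℝ) {t T : ℕ} (h : t ≤ T) :
    ExpIdx hn T (fun idx => f (traj step α0 idx t))
      = ExpIdx hn t (fun idx => f (traj step α0 idx t)) := by
  induction T with
  | zero => rw [Nat.le_zero.1 h]
  | succ T ih =>
    rcases Nat.lt_or_ge t (T+1) with hlt | hge
    · have htT : t ≤ T := Nat.lt_succ_iff.1 hlt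
      rw [expIdx_succ_invariant hn T _ (fun idx j => by rw [traj_modified htT j]), ih htT]
    · have : t = T + 1 := le_antisymm h hge
      rw [this]


section Main

lemma step_gain {n d : ℕ} (hn : 0 < n) (x : Fin n → EuclideanSpace ℝ (Fin d))
    (φ : Fin n → ℝ → ℝ) {lam : ℝ} (hlam : 0 < lam) {L : ℝ}
    (hconv : ∀ i, ConvexOn ℝ Set.univ (φ i))
    (hL : ∀ i, ∀ a b : ℝ, |φ i a - φ i b| ≤ L * |a - b|)
    (hx : ∀ i, ‖x i‖ ≤ 1)
    (step : (Fin n → ℝ) → Fin n → (Fin n → ℝ))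
    (hstep_max : ∀ α i c, Feas φ (Function.update α i c) →
      dualObj lam x φ (Function.update α i c) ≤ dualObj lam x φ (step α i))
    {α : Fin n → ℝ} (hfeas : Feas φ α) {s : ℝ} (hs0 : 0 < s) (hs1 : s ≤ 1) :
    (s/(n:ℝ)) * (primalObj lam x φ (wvec lam x α) - dualObj lam x φ α)
        - (s/(n:ℝ))^2 * (2*L^2/lam)
      ≤ (∑ j, dualObj lam x φ (step α j)) / (n:ℝ) - dualObj lam x φ α := by
  have hN : (0:ℝ) < (n:ℝ) := Nat.cast_pos.2 hn
  set w := wvec lam x α with hw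
  set Ssum : ℝ := ∑ i, (φ i ⟪x i, w⟫ + fconj (φ i) (-(α i)) + ⟪x i, w⟫ * α i) with hS
  have hsum_le : (s/(n:ℝ)) * Ssum - (n:ℝ) * (s^2 * (2*L^2) / (lam * (n:ℝ)^2))
      ≤ ∑ i, (dualObj lam x φ (step α i) - dualObj lam x φ α) := by
    have h := Finset.sum_le_sum (fun i (_ : i ∈ univ) =>
      coord_gain hn x φ hlam hconv hL hx step hstep_max hfeas hs0 hs1 i)
    calc (s/(n:ℝ)) * Ssum - (n:ℝ) * (s^2 * (2*L^2) / (lam * (n:ℝ)^2))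
        = ∑ i, ((s/(n:ℝ)) * (φ i ⟪x i, w⟫ + fconj (φ i) (-(α i)) + ⟪x i, w⟫ * α i)
            - s^2 * (2*L^2) / (lam * (n:ℝ)^2)) := by
          rw [Finset.sum_sub_distrib, ← Finset.mul_sum, Finset.sum_const, Finset.card_univ,
            Fintype.card_fin, nsmul_eq_mul, ← hS]
      _ ≤ _ := h
  have hPD : (1/(n:ℝ)) * Ssum = primalObj lam x φ w - dualObj lam x φ α := by
    have hsplit : Ssum = (∑ i, φ i ⟪x i, w⟫) + (∑ i, fconj (φ i) (-(α i)))
        + (∑ i, α i * ⟪x i, w⟫) := by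
      rw [hS, Finset.sum_add_distrib, Finset.sum_add_distrib]
      congr 1
      exact Finset.sum_congr rfl fun i _ => by ring
    have hwin : (1/(n:ℝ)) * ∑ i, α i * ⟪x i, w⟫ = lam * ‖w‖^2 := by
      rw [sum_beta_inner x lam (ne_of_gt hlam) (ne_of_gt hN), ← hw,
        real_inner_self_eq_norm_sq]
    have hneg : ∑ i, -(fconj (φ i) (-(α i))) = -∑ i, fconj (φ i) (-(α i)) :=
      Finset.sum_neg_distrib _
    rw [primalObj, dualObj, ← hw, hneg, hsplit]
    rw [mul_add, mul_add, hwin]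
    ring
  have h1 : (∑ j, dualObj lam x φ (step α j)) / (n:ℝ) - dualObj lam x φ α
      = (1/(n:ℝ)) * ∑ j, (dualObj lam x φ (step α j) - dualObj lam x φ α) := by
    rw [Finset.sum_sub_distrib, Finset.sum_const, Finset.card_univ, Fintype.card_fin,
      nsmul_eq_mul]
    field_simp
  have h2 : (s/(n:ℝ)) * (primalObj lam x φ w - dualObj lam x φ α) - (s/(n:ℝ))^2 * (2*L^2/lam)
      = (1/(n:ℝ)) * ((s/(n:ℝ)) * Ssum - (n:ℝ) * (s^2 * (2*L^2) / (lam * (n:ℝ)^2))) := by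
    rw [← hPD]
    field_simp
  rw [h2, h1]
  exact mul_le_mul_of_nonneg_left hsum_le (by positivity)

lemma wvec_smul_sum {n d : ℕ} (x : Fin n → EuclideanSpace ℝ (Fin d)) (lam : ℝ)
    {ι : Type*} (S : Finset ι) (c : ℝ) (β : ι → Fin n → ℝ) :
    wvec lam x (c • ∑ t ∈ S, β t) = ∑ t ∈ S, c • wvec lam x (β t) := by
  rw [wvec]
  have hcoord : ∀ i : Fin n, ((c • ∑ t ∈ S, β t) i) • x i
      = ∑ t ∈ S, (c * β t i) • x i := by
    intro i
    have h2 : ((c • ∑ t ∈ S, β t) i) = ∑ t ∈ S, c * β t i := by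
      simp [Finset.sum_apply, Finset.mul_sum]
    rw [h2, Finset.sum_smul]
  rw [Finset.sum_congr rfl fun i _ => hcoord i, Finset.sum_comm, Finset.smul_sum]
  refine Finset.sum_congr rfl fun t _ => ?_
  have h3 : ∑ i, (c * β t i) • x i = c • ∑ i, (β t i) • x i := by
    rw [Finset.smul_sum]
    exact Finset.sum_congr rfl fun i _ => (smul_smul c (β t i) (x i)).symm
  rw [h3, wvec, smul_comm]


lemma gap_avg {n d : ℕ} (hn : 0 < n) (x : Fin n → EuclideanSpace ℝ (Fin d))
    (φ : Fin n → ℝ → ℝ) (hconv : ∀ i, ConvexOn ℝ Set.univ (φ i))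
    {lam : ℝ} (hlam : 0 < lam) {T₀ T : ℕ} (hTT : T₀ < T)
    (β : ℕ → Fin n → ℝ) (hb : ∀ t, Feas φ (β t)) :
    primalObj lam x φ (wvec lam x ((1/((T:ℝ)-(T₀:ℝ))) • ∑ t ∈ Finset.Ico T₀ T, β t))
      - dualObj lam x φ ((1/((T:ℝ)-(T₀:ℝ))) • ∑ t ∈ Finset.Ico T₀ T, β t)
    ≤ (1/((T:ℝ)-(T₀:ℝ))) * ∑ t ∈ Finset.Ico T₀ T,
        (primalObj lam x φ (wvec lam x (β t)) - dualObj lam x φ (β t)) := by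
  have hN : (0:ℝ) < (n:ℝ) := Nat.cast_pos.2 hn
  set W : ℝ := 1/((T:ℝ)-(T₀:ℝ)) with hWdef
  have hTpos : (0:ℝ) < (T:ℝ)-(T₀:ℝ) := by
    have : (T₀:ℝ) < (T:ℝ) := by exact_mod_cast hTT
    linarith
  have hW0 : 0 ≤ W := by rw [hWdef]; positivity
  have hcard : ((Finset.Ico T₀ T).card : ℝ) = (T:ℝ)-(T₀:ℝ) := by
    rw [Nat.card_Ico]
    push_cast [Nat.cast_sub (le_of_lt hTT)]
    ring
  have hWsum : ∑ _t ∈ Finset.Ico T₀ T, W = 1 := by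
    rw [Finset.sum_const, nsmul_eq_mul, hcard, hWdef]
    field_simp
  set αb : Fin n → ℝ := W • ∑ t ∈ Finset.Ico T₀ T, β t with hαb
  have hwv : wvec lam x αb = ∑ t ∈ Finset.Ico T₀ T, W • wvec lam x (β t) :=
    wvec_smul_sum x lam _ W β
  have hgap : ∀ γ : Fin n → ℝ, primalObj lam x φ (wvec lam x γ) - dualObj lam x φ γ
      = (1/(n:ℝ)) * ∑ i, φ i ⟪x i, wvec lam x γ⟫
        + (1/(n:ℝ)) * ∑ i, fconj (φ i) (-(γ i)) + lam * ‖wvec lam x γ‖^2 := by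
    intro γ
    rw [primalObj, dualObj, Finset.sum_neg_distrib]
    ring
  -- A part
  have hA : ∑ i, φ i ⟪x i, wvec lam x αb⟫
      ≤ ∑ t ∈ Finset.Ico T₀ T, W * (∑ i, φ i ⟪x i, wvec lam x (β t)⟫) := by
    have hjen : ∀ i : Fin n, φ i ⟪x i, wvec lam x αb⟫
        ≤ ∑ t ∈ Finset.Ico T₀ T, W * φ i ⟪x i, wvec lam x (β t)⟫ := by
      intro i
      have hin : ⟪x i, wvec lam x αb⟫
          = ∑ t ∈ Finset.Ico T₀ T, W • ⟪x i, wvec lam x (β t)⟫ := by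
        rw [hwv, inner_sum]
        exact Finset.sum_congr rfl fun t _ => real_inner_smul_right _ _ _
      have := (hconv i).map_sum_le (fun t _ => hW0) hWsum
        (fun t _ => Set.mem_univ (⟪x i, wvec lam x (β t)⟫ : ℝ))
      rw [← hin] at this
      simpa [smul_eq_mul] using this
    calc ∑ i, φ i ⟪x i, wvec lam x αb⟫
        ≤ ∑ i, ∑ t ∈ Finset.Ico T₀ T, W * φ i ⟪x i, wvec lam x (β t)⟫ :=
          Finset.sum_le_sum fun i _ => hjen i
      _ = ∑ t ∈ Finset.Ico T₀ T, W * (∑ i, φ i ⟪x i, wvec lam x (β t)⟫) := by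
          rw [Finset.sum_comm]
          exact Finset.sum_congr rfl fun t _ => by rw [Finset.mul_sum]
  -- B part
  have hB : ∑ i, fconj (φ i) (-(αb i))
      ≤ ∑ t ∈ Finset.Ico T₀ T, W * (∑ i, fconj (φ i) (-(β t i))) := by
    have hjen : ∀ i : Fin n, fconj (φ i) (-(αb i))
        ≤ ∑ t ∈ Finset.Ico T₀ T, W * fconj (φ i) (-(β t i)) := by
      intro i
      have hneg : -(αb i) = ∑ t ∈ Finset.Ico T₀ T, W * (-(β t i)) := by
        have h1 : αb i = ∑ t ∈ Finset.Ico T₀ T, W * β t i := by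
          rw [hαb]
          simp [Finset.sum_apply, Finset.mul_sum]
        rw [h1, ← Finset.sum_neg_distrib]
        exact Finset.sum_congr rfl fun t _ => by ring
      have := (fconj_sum_le (Finset.Ico T₀ T) (fun _ => W) (fun t => -(β t i))
        (fun t _ => hW0) hWsum (fun t _ => hb t i)).2
      rw [← hneg] at this
      exact this
    calc ∑ i, fconj (φ i) (-(αb i))
        ≤ ∑ i, ∑ t ∈ Finset.Ico T₀ T, W * fconj (φ i) (-(β t i)) :=
          Finset.sum_le_sum fun i _ => hjen i
      _ = ∑ t ∈ Finset.Ico T₀ T, W * (∑ i, fconj (φ i) (-(β t i))) := by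
          rw [Finset.sum_comm]
          exact Finset.sum_congr rfl fun t _ => by rw [Finset.mul_sum]
  -- C part
  have hC : ‖wvec lam x αb‖^2 ≤ ∑ t ∈ Finset.Ico T₀ T, W * ‖wvec lam x (β t)‖^2 := by
    have hsq : ConvexOn ℝ Set.univ (fun v : EuclideanSpace ℝ (Fin d) => ‖v‖^2) := by
      refine ⟨convex_univ, fun u _ v _ a b ha hb hab => ?_⟩
      simp only [smul_eq_mul]
      have h1 : ‖a • u + b • v‖ ≤ a * ‖u‖ + b * ‖v‖ := by
        calc ‖a • u + b • v‖ ≤ ‖a • u‖ + ‖b • v‖ := norm_add_le _ _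
          _ = a * ‖u‖ + b * ‖v‖ := by
            rw [norm_smul, norm_smul, Real.norm_eq_abs, Real.norm_eq_abs,
              abs_of_nonneg ha, abs_of_nonneg hb]
      have h2 : ‖a • u + b • v‖^2 ≤ (a * ‖u‖ + b * ‖v‖)^2 := by
        have := norm_nonneg (a • u + b • v)
        nlinarith
      nlinarith [sq_nonneg (‖u‖ - ‖v‖), mul_nonneg ha hb, norm_nonneg u, norm_nonneg v]
    have h := hsq.map_sum_le (fun t (_ : t ∈ Finset.Ico T₀ T) => hW0) hWsum
      (fun t _ => Set.mem_univ (wvec lam x (β t)))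
    rw [← hwv] at h
    simpa [smul_eq_mul] using h
  -- combine
  rw [hgap αb, Finset.sum_congr rfl fun t _ => hgap (β t)]
  have hfin : (1/(n:ℝ)) * (∑ t ∈ Finset.Ico T₀ T, W * (∑ i, φ i ⟪x i, wvec lam x (β t)⟫))
      + (1/(n:ℝ)) * (∑ t ∈ Finset.Ico T₀ T, W * (∑ i, fconj (φ i) (-(β t i))))
      + lam * (∑ t ∈ Finset.Ico T₀ T, W * ‖wvec lam x (β t)‖^2)
      = W * ∑ t ∈ Finset.Ico T₀ T,
          ((1/(n:ℝ)) * ∑ i, φ i ⟪x i, wvec lam x (β t)⟫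
            + (1/(n:ℝ)) * ∑ i, fconj (φ i) (-(β t i)) + lam * ‖wvec lam x (β t)‖^2) := by
    rw [Finset.mul_sum, Finset.mul_sum, Finset.mul_sum, Finset.mul_sum,
      ← Finset.sum_add_distrib, ← Finset.sum_add_distrib]
    exact Finset.sum_congr rfl fun t _ => by ring
  rw [← hfin]
  have t1 : (1/(n:ℝ)) * ∑ i, φ i ⟪x i, wvec lam x αb⟫
      ≤ (1/(n:ℝ)) * (∑ t ∈ Finset.Ico T₀ T, W * (∑ i, φ i ⟪x i, wvec lam x (β t)⟫)) :=
    mul_le_mul_of_nonneg_left hA (by positivity)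
  have t2 : (1/(n:ℝ)) * ∑ i, fconj (φ i) (-(αb i))
      ≤ (1/(n:ℝ)) * (∑ t ∈ Finset.Ico T₀ T, W * (∑ i, fconj (φ i) (-(β t i)))) :=
    mul_le_mul_of_nonneg_left hB (by positivity)
  have t3 : lam * ‖wvec lam x αb‖^2
      ≤ lam * (∑ t ∈ Finset.Ico T₀ T, W * ‖wvec lam x (β t)‖^2) :=
    mul_le_mul_of_nonneg_left hC (le_of_lt hlam)
  linarith


lemma scalar_phase1 {n : ℕ} (hn : 0 < n) {K : ℝ} (hK : 0 ≤ K) {e : ℕ → ℝ}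
    (hrec : ∀ t, e (t+1) ≤ (1 - 1/(n:ℝ)) * e t + (1/(n:ℝ))^2 * K)
    (he0 : e 0 ≤ 1) :
    ∀ t, e t ≤ (1 - 1/(n:ℝ))^t + K/(n:ℝ) := by
  have hN : (0:ℝ) < (n:ℝ) := Nat.cast_pos.2 hn
  have hN1 : (1:ℝ) ≤ (n:ℝ) := by exact_mod_cast hn
  have hc0 : (0:ℝ) ≤ 1 - 1/(n:ℝ) := by
    have : 1/(n:ℝ) ≤ 1 := by
      rw [div_le_one hN]; exact hN1
    linarith
  intro t
  induction t with
  | zero =>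
    have : (0:ℝ) ≤ K/(n:ℝ) := by positivity
    simpa using by linarith
  | succ t ih =>
    have h1 := hrec t
    have h2 : (1 - 1/(n:ℝ)) * e t ≤ (1 - 1/(n:ℝ)) * ((1 - 1/(n:ℝ))^t + K/(n:ℝ)) :=
      mul_le_mul_of_nonneg_left ih hc0
    have h3 : (1 - 1/(n:ℝ)) * ((1 - 1/(n:ℝ))^t + K/(n:ℝ)) + (1/(n:ℝ))^2 * K
        = (1 - 1/(n:ℝ))^(t+1) + K/(n:ℝ) := by
      rw [pow_succ]
      ring
    linarith

lemma scalar_phase2 {n : ℕ} (hn : 0 < n) {K : ℝ} (hK : 0 ≤ K) {e : ℕ → ℝ}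
    (hrec : ∀ t (s : ℝ), 0 < s → s ≤ 1 → e (t+1) ≤ (1 - s/(n:ℝ)) * e t + (s/(n:ℝ))^2 * K)
    {t₀ : ℕ} (hbase : e t₀ ≤ 2*K/(n:ℝ)) :
    ∀ k : ℕ, e (t₀ + k) ≤ 4*K/(2*(n:ℝ) + k) := by
  have hN : (0:ℝ) < (n:ℝ) := Nat.cast_pos.2 hn
  have hN1 : (1:ℝ) ≤ (n:ℝ) := by exact_mod_cast hn
  intro k
  induction k with
  | zero =>
    have h0 : 4*K/(2*(n:ℝ) + ((0:ℕ):ℝ)) = 2*K/(n:ℝ) := by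
      rw [Nat.cast_zero, add_zero]
      rw [show (4:ℝ)*K = (2*K)*2 by ring, show (2:ℝ)*(n:ℝ) = (n:ℝ)*2 by ring,
        mul_div_mul_right _ _ (two_ne_zero)]
    rw [Nat.add_zero, h0]
    exact hbase
  | succ k ih =>
    set m : ℝ := 2*(n:ℝ) + k with hm
    have hm2 : (2:ℝ) ≤ m := by
      have : (0:ℝ) ≤ (k:ℝ) := Nat.cast_nonneg k
      simp only [hm]; linarith
    have hmpos : (0:ℝ) < m := by linarith
    have hs0 : (0:ℝ) < 2*(n:ℝ)/m := by positivity
    have hs1 : 2*(n:ℝ)/m ≤ 1 := by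
      rw [div_le_one hmpos]
      simp only [hm]
      have : (0:ℝ) ≤ (k:ℝ) := Nat.cast_nonneg k
      linarith
    have h1 := hrec (t₀ + k) (2*(n:ℝ)/m) hs0 hs1
    have hsn : (2*(n:ℝ)/m)/(n:ℝ) = 2/m := by
      field_simp
    rw [hsn] at h1
    have hcoef : (0:ℝ) ≤ 1 - 2/m := by
      have : 2/m ≤ 1 := by rw [div_le_one hmpos]; linarith
      linarith
    have h2 : (1 - 2/m) * e (t₀ + k) ≤ (1 - 2/m) * (4*K/m) :=
      mul_le_mul_of_nonneg_left ih hcoef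
    have h3 : (1 - 2/m) * (4*K/m) + (2/m)^2 * K ≤ 4*K/(m+1) := by
      have hexp : (1 - 2/m) * (4*K/m) + (2/m)^2 * K = (4*K*m - 4*K)/(m^2) := by
        field_simp
        ring
      rw [hexp, div_le_div_iff₀ (by positivity) (by positivity)]
      nlinarith
    have hcast : 2*(n:ℝ) + ((k:ℕ)+1 : ℕ) = m + 1 := by
      push_cast
      simp only [hm]
      ring
    have : t₀ + (k+1) = (t₀ + k) + 1 := by omega
    rw [this, hcast]
    linarith

end Main

end SDCAaux

set_option maxHeartbeats 2000000 in
/-- Theorem 1: SDCA convergence for `L`-Lipschitz losses, started at `α⁰ = 0`.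
With `T₀ ≥ max(0, ⌈n log(λn/(2L²))⌉) + 16L²/(λ ε_P)` and
`T - T₀ ≥ n + 4L²/(λ ε_P)`, the expected duality gap of the averaged iterate is
at most `ε_P`, and the expected dual suboptimality at any time `t ≥ T₀` is at
most `ε_P / 2`. -/
theorem sdca_lipschitz
    (n d : ℕ) (hn : 0 < n)
    (x : Fin n → EuclideanSpace ℝ (Fin d))
    (φ : Fin n → ℝ → ℝ) (hconv : ∀ i, ConvexOn ℝ Set.univ (φ i))
    (lam : ℝ) (hlam : 0 < lam)
    (L : ℝ) (hL : ∀ i, ∀ a b : ℝ, |φ i a - φ i b| ≤ L * |a - b|)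
    (hx : ∀ i, ‖x i‖ ≤ 1) (hφ0 : ∀ i a, 0 ≤ φ i a) (hφ1 : ∀ i, φ i 0 ≤ 1)
    (step : (Fin n → ℝ) → Fin n → (Fin n → ℝ))
    (hstep_off : ∀ α i j, j ≠ i → step α i j = α j)
    (hstep_feas : ∀ α i, Feas φ α → Feas φ (step α i))
    (hstep_max : ∀ α i c, Feas φ (Function.update α i c) →
      dualObj lam x φ (Function.update α i c) ≤ dualObj lam x φ (step α i))
    (αstar : Fin n → ℝ) (hstar_feas : Feas φ αstar)
    (hstar_max : ∀ β, Feas φ β → dualObj lam x φ β ≤ dualObj lam x φ αstar)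
    (εP : ℝ) (hεP : 0 < εP)
    (T₀ T : ℕ)
    (hT₀ : ((max 0 ⌈(n : ℝ) * Real.log (lam * n / (2 * L ^ 2))⌉ : ℤ) : ℝ)
        + 16 * L ^ 2 / (lam * εP) ≤ T₀)
    (hT : (n : ℝ) + 4 * L ^ 2 / (lam * εP) ≤ (T : ℝ) - T₀) :
    (ExpIdx hn T (fun idx =>
        primalObj lam x φ (wvec lam x
          ((1 / ((T : ℝ) - T₀)) • ∑ t ∈ Finset.Ico T₀ T, traj step (fun _ => 0) idx t))
        - dualObj lam x φ
          ((1 / ((T : ℝ) - T₀)) • ∑ t ∈ Finset.Ico T₀ T, traj step (fun _ => 0) idx t)) ≤ εP)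
    ∧ ∀ t : ℕ, T₀ ≤ t →
        ExpIdx hn t (fun idx =>
          dualObj lam x φ αstar - dualObj lam x φ (traj step (fun _ => 0) idx t)) ≤ εP / 2 := by
  classical
  have hN : (0:ℝ) < (n:ℝ) := Nat.cast_pos.2 hn
  have hN1 : (1:ℝ) ≤ (n:ℝ) := by exact_mod_cast hn
  set z : Fin n → ℝ := (fun _ => 0) with hz
  have hL0 : 0 ≤ L := by
    have h := hL ⟨0, hn⟩ 0 1
    have h2 : (0:ℝ) ≤ |φ ⟨0, hn⟩ 0 - φ ⟨0, hn⟩ 1| := abs_nonneg _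
    simp only [show |(0:ℝ) - 1| = 1 by norm_num, mul_one] at h
    linarith
  have feas0 : Feas φ z := by
    intro i
    apply SDCAaux.finiteConj_of_ub (c := 0)
    intro zz
    have := hφ0 i zz
    simp only [hz, neg_zero, mul_zero, zero_sub]
    linarith
  have feas_traj : ∀ idx t, Feas φ (traj step z idx t) := by
    intro idx t
    induction t with
    | zero => exact feas0
    | succ t ih => exact hstep_feas _ _ ih
  set E : ℕ → ℝ := fun t => ExpIdx hn t (fun idx => dualObj lam x φ (traj step z idx t)) with hE
  set Dstar : ℝ := dualObj lam x φ αstar with hDstar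
  set e : ℕ → ℝ := fun t => Dstar - E t with he
  set KK : ℝ := 2*L^2/lam with hKK
  have hKK0 : 0 ≤ KK := by rw [hKK]; positivity
  have hrec : ∀ t (s : ℝ), 0 < s → s ≤ 1 →
      e (t+1) ≤ (1 - s/(n:ℝ)) * e t + (s/(n:ℝ))^2 * KK := by
    intro t s hs0 hs1
    have hpt : ∀ idx : ℕ → Fin n,
        (1 - s/(n:ℝ)) * dualObj lam x φ (traj step z idx t)
            + ((s/(n:ℝ)) * Dstar - (s/(n:ℝ))^2 * KK)
          ≤ (∑ j, dualObj lam x φ (step (traj step z idx t) j)) / (n:ℝ) := by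
      intro idx
      have hsg := SDCAaux.step_gain hn x φ hlam hconv hL hx step hstep_max
        (feas_traj idx t) hs0 hs1
      have hwd : Dstar ≤ primalObj lam x φ (wvec lam x (traj step z idx t)) :=
        SDCAaux.weak_duality x φ hlam (ne_of_gt hN) hstar_feas _
      have hmul : (s/(n:ℝ)) * (Dstar - dualObj lam x φ (traj step z idx t))
          ≤ (s/(n:ℝ)) * (primalObj lam x φ (wvec lam x (traj step z idx t))
              - dualObj lam x φ (traj step z idx t)) := by
        apply mul_le_mul_of_nonneg_left _ (by positivity)
        linarith
      rw [hKK]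
      nlinarith [hsg, hmul]
    have h1 := SDCAaux.expIdx_mono hn (t := t) hpt
    rw [SDCAaux.expIdx_add, SDCAaux.expIdx_smul, SDCAaux.expIdx_const,
      ← SDCAaux.expIdx_traj_succ hn step z t (dualObj lam x φ)] at h1
    have hE1 : E (t+1)
        = ExpIdx hn (t+1) (fun idx => dualObj lam x φ (traj step z idx (t+1))) := rfl
    have hEt : E t = ExpIdx hn t (fun idx => dualObj lam x φ (traj step z idx t)) := rfl
    rw [← hEt, ← hE1] at h1
    simp only [he]
    nlinarith [h1]
  have hEle : ∀ t, E t ≤ Dstar := by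
    intro t
    have h1 : ExpIdx hn t (fun idx => dualObj lam x φ (traj step z idx t))
        ≤ ExpIdx hn t (fun _ => Dstar) :=
      SDCAaux.expIdx_mono hn fun idx => hstar_max _ (feas_traj idx t)
    rw [SDCAaux.expIdx_const] at h1
    exact h1
  have hnn : ∀ t, 0 ≤ e t := fun t => by
    simp only [he]
    linarith [hEle t]
  have hwz : wvec lam x z = 0 := by
    rw [wvec]
    have hzz : ∀ i : Fin n, z i • x i = (0 : EuclideanSpace ℝ (Fin d)) := fun i => by
      rw [hz]; simp
    rw [Finset.sum_congr rfl fun i _ => hzz i, Finset.sum_const, smul_zero, smul_zero]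
  have hDz : 0 ≤ dualObj lam x φ z := by
    rw [dualObj, hwz]
    have h1 : ∀ i : Fin n, 0 ≤ -(fconj (φ i) (-(z i))) := by
      intro i
      have h2 : fconj (φ i) (-(z i)) ≤ 0 := by
        apply SDCAaux.fconj_le
        intro zz
        have := hφ0 i zz
        simp only [hz, neg_zero, mul_zero, zero_sub]
        linarith
      linarith
    have h3 : (0:ℝ) ≤ ∑ i, -(fconj (φ i) (-(z i))) := Finset.sum_nonneg fun i _ => h1 i
    have h4 : (0:ℝ) ≤ (1/(n:ℝ)) * ∑ i, -(fconj (φ i) (-(z i))) := by positivity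
    simp only [norm_zero]
    nlinarith
  have hDstar1 : Dstar ≤ 1 := by
    have hwd : Dstar ≤ primalObj lam x φ 0 :=
      SDCAaux.weak_duality x φ hlam (ne_of_gt hN) hstar_feas 0
    have hP0 : primalObj lam x φ 0 ≤ 1 := by
      rw [primalObj]
      have h1 : ∀ i : Fin n, φ i ⟪x i, (0 : EuclideanSpace ℝ (Fin d))⟫ ≤ 1 := by
        intro i
        rw [inner_zero_right]
        exact hφ1 i
      have h2 : ∑ i, φ i ⟪x i, (0 : EuclideanSpace ℝ (Fin d))⟫ ≤ (n:ℝ) := by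
        calc ∑ i, φ i ⟪x i, (0 : EuclideanSpace ℝ (Fin d))⟫
            ≤ ∑ _i : Fin n, (1:ℝ) := Finset.sum_le_sum fun i _ => h1 i
          _ = (n:ℝ) := by
              rw [Finset.sum_const, nsmul_eq_mul, Finset.card_univ, Fintype.card_fin, mul_one]
      have h3 : (1/(n:ℝ)) * ∑ i, φ i ⟪x i, (0 : EuclideanSpace ℝ (Fin d))⟫
          ≤ (1/(n:ℝ)) * (n:ℝ) :=
        mul_le_mul_of_nonneg_left h2 (by positivity)
      have h4 : (1/(n:ℝ)) * (n:ℝ) = 1 := by field_simp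
      simp only [norm_zero]
      nlinarith
    linarith
  have hE0 : E 0 = dualObj lam x φ z := by
    have h1 : (fun idx : ℕ → Fin n => dualObj lam x φ (traj step z idx 0))
        = fun _ => dualObj lam x φ z := rfl
    rw [hE]
    simp only []
    rw [h1, SDCAaux.expIdx_const]
  have he0 : e 0 ≤ 1 := by
    simp only [he, hE0]
    linarith
  by_cases hLz : L = 0
  · -- degenerate case : all feasible vectors are 0
    have hzero : ∀ α : Fin n → ℝ, Feas φ α → α = z := by
      intro α hα
      funext i
      have h1 := SDCAaux.abs_le_of_finiteConj (hL i) (hα i)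
      rw [hLz] at h1
      have h2 : -(α i) = 0 := abs_nonpos_iff.1 h1
      simp only [hz]
      linarith
    have htraj0 : ∀ idx t, traj step z idx t = z := fun idx t => hzero _ (feas_traj idx t)
    have hstar0 : αstar = z := hzero αstar hstar_feas
    constructor
    · have hconst : ∀ i : Fin n, ∀ a b : ℝ, φ i a = φ i b := by
        intro i a b
        have h := hL i a b
        rw [hLz, zero_mul] at h
        have h2 : |φ i a - φ i b| = 0 := le_antisymm h (abs_nonneg _)
        have h3 := abs_eq_zero.1 h2
        linarith
      have hfz : ∀ i : Fin n, fconj (φ i) (-(z i)) = - φ i 0 := by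
        intro i
        have h1 : (fun zz : ℝ => zz * (-(z i)) - φ i zz) = fun _ => -(φ i 0) := by
          funext zz
          simp only [hz, neg_zero, mul_zero, zero_sub]
          rw [hconst i zz 0]
        rw [fconj, h1, ciSup_const]
      have hgap0 : primalObj lam x φ (wvec lam x z) - dualObj lam x φ z = 0 := by
        rw [primalObj, dualObj, hwz]
        simp only [norm_zero, inner_zero_right]
        have h1 : ∀ i : Fin n, -(fconj (φ i) (-(z i))) = φ i 0 := by
          intro i
          rw [hfz i]
          ring
        rw [Finset.sum_congr rfl fun i _ => h1 i]
        ring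
      have hav : ∀ idx : ℕ → Fin n,
          ((1 / ((T : ℝ) - T₀)) • ∑ t ∈ Finset.Ico T₀ T, traj step z idx t) = z := by
        intro idx
        rw [Finset.sum_congr rfl fun t _ => htraj0 idx t]
        funext i
        simp [hz, Finset.sum_apply]
      have hfun : (fun idx : ℕ → Fin n =>
          primalObj lam x φ (wvec lam x
            ((1 / ((T : ℝ) - T₀)) • ∑ t ∈ Finset.Ico T₀ T, traj step z idx t))
          - dualObj lam x φ
            ((1 / ((T : ℝ) - T₀)) • ∑ t ∈ Finset.Ico T₀ T, traj step z idx t))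
          = fun _ => (0:ℝ) := by
        funext idx
        rw [hav idx, hgap0]
      rw [hfun, SDCAaux.expIdx_const]
      linarith
    · intro t ht
      have hfun : (fun idx : ℕ → Fin n => dualObj lam x φ αstar
          - dualObj lam x φ (traj step z idx t)) = fun _ => (0:ℝ) := by
        funext idx
        rw [htraj0 idx t, hstar0]
        ring
      rw [hfun, SDCAaux.expIdx_const]
      linarith
  -- main case : L > 0
  have hLpos : 0 < L := lt_of_le_of_ne hL0 (Ne.symm hLz)
  set t₀ : ℕ := (max 0 ⌈(n : ℝ) * Real.log (lam * n / (2 * L ^ 2))⌉).toNat with ht₀def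
  have hcast : ((t₀ : ℕ) : ℝ)
      = ((max 0 ⌈(n : ℝ) * Real.log (lam * n / (2 * L ^ 2))⌉ : ℤ) : ℝ) := by
    have h0 : ((t₀:ℕ):ℤ) = (max 0 ⌈(n : ℝ) * Real.log (lam * n / (2 * L ^ 2))⌉ : ℤ) := by
      rw [ht₀def]
      exact Int.toNat_of_nonneg (le_max_left _ _)
    exact_mod_cast congrArg (Int.cast : ℤ → ℝ) h0
  have hgeo : (1 - 1/(n:ℝ))^t₀ ≤ KK/(n:ℝ) := by
    have hc0 : (0:ℝ) ≤ 1 - 1/(n:ℝ) := by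
      have : 1/(n:ℝ) ≤ 1 := by rw [div_le_one hN]; exact hN1
      linarith
    rcases le_or_gt (lam * (n:ℝ)) (2*L^2) with hcase | hcase
    · have h1 : (1:ℝ) ≤ KK/(n:ℝ) := by
        rw [hKK, div_div, one_le_div (by positivity)]
        linarith
      have h2 : (1 - 1/(n:ℝ))^t₀ ≤ 1 :=
        pow_le_one₀ hc0 (by linarith [one_div_pos.2 hN])
      linarith
    · set R : ℝ := lam * (n:ℝ) / (2*L^2) with hR
      have hR1 : 1 < R := by
        rw [hR, lt_div_iff₀ (by positivity)]
        linarith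
      have hRpos : 0 < R := by linarith
      have ht₀ge : (n:ℝ) * Real.log R ≤ (t₀:ℝ) := by
        rw [hcast]
        have h1 : ((⌈(n : ℝ) * Real.log (lam * n / (2 * L ^ 2))⌉ : ℤ) : ℝ)
            ≤ ((max 0 ⌈(n : ℝ) * Real.log (lam * n / (2 * L ^ 2))⌉ : ℤ) : ℝ) := by
          exact_mod_cast le_max_right _ _
        have h2 := Int.le_ceil ((n : ℝ) * Real.log (lam * n / (2 * L ^ 2)))
        rw [hR]
        linarith
      have hexp1 : 1 - 1/(n:ℝ) ≤ Real.exp (-(1/(n:ℝ))) := by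
        have := Real.add_one_le_exp (-(1/(n:ℝ)))
        linarith
      have hchain : (1 - 1/(n:ℝ))^t₀ ≤ Real.exp (-(1/(n:ℝ)))^t₀ :=
        pow_le_pow_left₀ hc0 hexp1 t₀
      have hexp2 : Real.exp (-(1/(n:ℝ)))^t₀ = Real.exp ((t₀:ℝ) * (-(1/(n:ℝ)))) :=
        (Real.exp_nat_mul _ t₀).symm
      have hexp3 : Real.exp ((t₀:ℝ) * (-(1/(n:ℝ)))) ≤ Real.exp (- Real.log R) := by
        apply Real.exp_le_exp.2
        have h5 : Real.log R ≤ (t₀:ℝ)/(n:ℝ) := by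
          rw [le_div_iff₀ hN]
          nlinarith [ht₀ge]
        have h6 : (t₀:ℝ) * (-(1/(n:ℝ))) = -((t₀:ℝ)/(n:ℝ)) := by ring
        rw [h6]
        linarith
      have hexp4 : Real.exp (- Real.log R) = KK/(n:ℝ) := by
        rw [Real.exp_neg, Real.exp_log hRpos, hR, inv_div, hKK, div_div]
      linarith
  have hsp1 := SDCAaux.scalar_phase1 hn hKK0 (fun t => hrec t 1 one_pos le_rfl) he0
  have hbase : e t₀ ≤ 2*KK/(n:ℝ) := by
    have h1 := hsp1 t₀
    have h2 : KK/(n:ℝ) + KK/(n:ℝ) = 2*KK/(n:ℝ) := by ring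
    linarith [hgeo]
  have hsp2 := SDCAaux.scalar_phase2 hn hKK0 hrec hbase
  have hT₀cast : ((t₀:ℕ):ℝ) + 16 * L ^ 2 / (lam * εP) ≤ (T₀:ℝ) := by
    rw [hcast]; exact hT₀
  have hQpos : (0:ℝ) < 16 * L ^ 2 / (lam * εP) := by positivity
  have ht₀T₀ : t₀ ≤ T₀ := by
    have h1 : ((t₀:ℕ):ℝ) ≤ (T₀:ℝ) := by linarith
    exact_mod_cast h1
  have hepred : ∀ t : ℕ, T₀ ≤ t → e t ≤ εP / 2 := by
    intro t ht
    have ht₀t : t₀ ≤ t := le_trans ht₀T₀ ht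
    have hk := hsp2 (t - t₀)
    rw [Nat.add_sub_cancel' ht₀t] at hk
    have hkcast : ((t - t₀ : ℕ):ℝ) = (t:ℝ) - (t₀:ℝ) := by
      push_cast [Nat.cast_sub ht₀t]
      ring
    have hden : 16 * L ^ 2 / (lam * εP) ≤ 2*(n:ℝ) + ((t - t₀:ℕ):ℝ) := by
      rw [hkcast]
      have h7 : (T₀:ℝ) ≤ (t:ℝ) := by exact_mod_cast ht
      linarith
    have hfrac : 4*KK/(2*(n:ℝ) + ((t - t₀:ℕ):ℝ)) ≤ 4*KK/(16 * L ^ 2 / (lam * εP)) := by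
      gcongr
    have heqq : 4*KK/(16 * L ^ 2 / (lam * εP)) = εP/2 := by
      rw [hKK]
      field_simp
      try ring
    linarith [hk]
  constructor
  · -- part 1 : averaged duality gap
    have hT0T : T₀ < T := by
      have h9 : (0:ℝ) < 4 * L ^ 2 / (lam * εP) := by positivity
      have h10 : (T₀:ℝ) < (T:ℝ) := by linarith [hT]
      exact_mod_cast h10
    have hTpos : (0:ℝ) < (T:ℝ) - (T₀:ℝ) := by
      have : (T₀:ℝ) < (T:ℝ) := by exact_mod_cast hT0T
      linarith
    set θ : ℝ := min (1/(n:ℝ)) (lam * εP/(4*L^2)) with hθ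
    have hθ0 : 0 < θ := lt_min (by positivity) (by positivity)
    have hθn : θ ≤ 1/(n:ℝ) := min_le_left _ _
    have hθL : θ ≤ lam * εP/(4*L^2) := min_le_right _ _
    set s : ℝ := θ * (n:ℝ) with hs
    have hs0 : 0 < s := by rw [hs]; positivity
    have hs1 : s ≤ 1 := by
      rw [hs]
      calc θ * (n:ℝ) ≤ (1/(n:ℝ)) * (n:ℝ) := mul_le_mul_of_nonneg_right hθn (le_of_lt hN)
        _ = 1 := by field_simp
    have hsn : s/(n:ℝ) = θ := by
      rw [hs, mul_div_assoc, div_self (ne_of_gt hN), mul_one]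
    have hGt : ∀ t, θ * ExpIdx hn t (fun idx =>
        primalObj lam x φ (wvec lam x (traj step z idx t)) - dualObj lam x φ (traj step z idx t))
        ≤ E (t+1) - E t + θ^2 * KK := by
      intro t
      have hpt : ∀ idx : ℕ → Fin n,
          θ * (primalObj lam x φ (wvec lam x (traj step z idx t))
            - dualObj lam x φ (traj step z idx t)) + dualObj lam x φ (traj step z idx t)
          ≤ (∑ j, dualObj lam x φ (step (traj step z idx t) j)) / (n:ℝ) + θ^2 * KK := by
        intro idx
        have hsg := SDCAaux.step_gain hn x φ hlam hconv hL hx step hstep_max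
          (feas_traj idx t) hs0 hs1
        rw [hsn] at hsg
        rw [hKK]
        nlinarith [hsg]
      have h1 := SDCAaux.expIdx_mono hn (t := t) hpt
      rw [SDCAaux.expIdx_add, SDCAaux.expIdx_add, SDCAaux.expIdx_smul, SDCAaux.expIdx_const,
        ← SDCAaux.expIdx_traj_succ hn step z t (dualObj lam x φ)] at h1
      have hE1 : E (t+1)
          = ExpIdx hn (t+1) (fun idx => dualObj lam x φ (traj step z idx (t+1))) := rfl
      have hEt : E t = ExpIdx hn t (fun idx => dualObj lam x φ (traj step z idx t)) := rfl
      rw [← hEt, ← hE1] at h1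
      linarith [h1]
    have hcard : ((Finset.Ico T₀ T).card : ℝ) = (T:ℝ) - (T₀:ℝ) := by
      rw [Nat.card_Ico]
      push_cast [Nat.cast_sub (le_of_lt hT0T)]
      ring
    have htel : ∑ t ∈ Finset.Ico T₀ T, (E (t+1) - E t) = E T - E T₀ := by
      rw [Finset.sum_Ico_eq_sub _ (le_of_lt hT0T), Finset.sum_range_sub, Finset.sum_range_sub]
      ring
    have hsum : θ * ∑ t ∈ Finset.Ico T₀ T, ExpIdx hn t (fun idx =>
        primalObj lam x φ (wvec lam x (traj step z idx t)) - dualObj lam x φ (traj step z idx t))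
        ≤ (E T - E T₀) + ((T:ℝ) - T₀) * (θ^2 * KK) := by
      have h1 : ∑ t ∈ Finset.Ico T₀ T, (θ * ExpIdx hn t (fun idx =>
          primalObj lam x φ (wvec lam x (traj step z idx t))
            - dualObj lam x φ (traj step z idx t)))
          ≤ ∑ t ∈ Finset.Ico T₀ T, (E (t+1) - E t + θ^2 * KK) :=
        Finset.sum_le_sum fun t _ => hGt t
      rw [← Finset.mul_sum, Finset.sum_add_distrib, htel, Finset.sum_const, nsmul_eq_mul,
        hcard] at h1
      exact h1
    have hET₀ : E T - E T₀ ≤ εP/2 := by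
      have h1 := hepred T₀ le_rfl
      have h2 := hEle T
      simp only [he] at h1
      linarith
    -- Jensen + restriction
    have hjen : ∀ idx : ℕ → Fin n,
        primalObj lam x φ (wvec lam x
            ((1 / ((T : ℝ) - T₀)) • ∑ t ∈ Finset.Ico T₀ T, traj step z idx t))
          - dualObj lam x φ ((1 / ((T : ℝ) - T₀)) • ∑ t ∈ Finset.Ico T₀ T, traj step z idx t)
        ≤ (1 / ((T : ℝ) - T₀)) * ∑ t ∈ Finset.Ico T₀ T,
            (primalObj lam x φ (wvec lam x (traj step z idx t))
              - dualObj lam x φ (traj step z idx t)) := fun idx =>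
      SDCAaux.gap_avg hn x φ hconv hlam hT0T (fun t => traj step z idx t) (feas_traj idx)
    have hmain := SDCAaux.expIdx_mono hn (t := T) hjen
    rw [SDCAaux.expIdx_smul, SDCAaux.expIdx_finsum] at hmain
    have hres : ∀ t ∈ Finset.Ico T₀ T,
        ExpIdx hn T (fun idx => primalObj lam x φ (wvec lam x (traj step z idx t))
            - dualObj lam x φ (traj step z idx t))
        = ExpIdx hn t (fun idx => primalObj lam x φ (wvec lam x (traj step z idx t))
            - dualObj lam x φ (traj step z idx t)) := by
      intro t htmem
      exact SDCAaux.expIdx_traj_of_le hn step z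
        (fun α => primalObj lam x φ (wvec lam x α) - dualObj lam x φ α)
        (le_of_lt (Finset.mem_Ico.1 htmem).2)
    rw [Finset.sum_congr rfl hres] at hmain
    -- numeric conclusion
    have hθT : 1 ≤ θ * ((T:ℝ) - T₀) := by
      have hTn : (n:ℝ) ≤ (T:ℝ) - T₀ := by
        have h9 : (0:ℝ) ≤ 4 * L ^ 2 / (lam * εP) := by positivity
        linarith [hT]
      have hTL : 4*L^2/(lam*εP) ≤ (T:ℝ) - T₀ := by
        linarith [hT, hN]
      rcases min_cases (1/(n:ℝ)) (lam * εP/(4*L^2)) with ⟨hmin, _⟩ | ⟨hmin, _⟩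
      · rw [hθ, hmin]
        calc (1:ℝ) = (1/(n:ℝ)) * (n:ℝ) := by field_simp
          _ ≤ (1/(n:ℝ)) * ((T:ℝ) - T₀) :=
              mul_le_mul_of_nonneg_left hTn (by positivity)
      · rw [hθ, hmin]
        calc (1:ℝ) = (lam * εP/(4*L^2)) * (4*L^2/(lam*εP)) := by
              field_simp
          _ ≤ (lam * εP/(4*L^2)) * ((T:ℝ) - T₀) :=
              mul_le_mul_of_nonneg_left hTL (by positivity)
    have hθKK : θ * KK ≤ εP/2 := by
      rw [hKK]
      calc θ * (2*L^2/lam) ≤ (lam * εP/(4*L^2)) * (2*L^2/lam) := by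
            apply mul_le_mul_of_nonneg_right hθL (by positivity)
        _ = εP/2 := by field_simp; ring
    set SG : ℝ := ∑ t ∈ Finset.Ico T₀ T, ExpIdx hn t (fun idx =>
        primalObj lam x φ (wvec lam x (traj step z idx t))
          - dualObj lam x φ (traj step z idx t)) with hSG
    have hSGb : θ * SG ≤ θ * (((T:ℝ) - T₀) * εP) := by
      have h12 : ((T:ℝ) - T₀) * (θ^2 * KK) = (((T:ℝ) - T₀) * θ) * (θ * KK) := by ring
      have h13 : (((T:ℝ) - T₀) * θ) * (θ * KK) ≤ (((T:ℝ) - T₀) * θ) * (εP/2) :=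
        mul_le_mul_of_nonneg_left hθKK (by positivity)
      have h14 : εP/2 ≤ (((T:ℝ) - T₀) * θ) * (εP/2) := by
        apply le_mul_of_one_le_left (by positivity)
        linarith [hθT]
      have h15 : θ * SG ≤ (E T - E T₀) + ((T:ℝ) - T₀) * (θ^2 * KK) := hsum
      have h16 : (((T:ℝ) - T₀) * θ) * (εP/2) + (((T:ℝ) - T₀) * θ) * (εP/2)
          = θ * (((T:ℝ) - T₀) * εP) := by ring
      linarith
    have hSGc : SG ≤ ((T:ℝ) - T₀) * εP := le_of_mul_le_mul_left hSGb hθ0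
    have hfinal : (1 / ((T : ℝ) - T₀)) * SG ≤ εP := by
      have h17 : (1 / ((T : ℝ) - T₀)) * SG ≤ (1 / ((T : ℝ) - T₀)) * (((T:ℝ) - T₀) * εP) :=
        mul_le_mul_of_nonneg_left hSGc (by positivity)
      have h18 : (1 / ((T : ℝ) - T₀)) * (((T:ℝ) - T₀) * εP) = εP := by
        field_simp
      linarith
    calc ExpIdx hn T (fun idx =>
        primalObj lam x φ (wvec lam x
          ((1 / ((T : ℝ) - T₀)) • ∑ t ∈ Finset.Ico T₀ T, traj step z idx t))
        - dualObj lam x φ ((1 / ((T : ℝ) - T₀)) • ∑ t ∈ Finset.Ico T₀ T, traj step z idx t))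
        ≤ (1 / ((T : ℝ) - T₀)) * SG := hmain
      _ ≤ εP := hfinal
  · -- part 2 : dual suboptimality
    intro t ht
    have h1 : ExpIdx hn t (fun idx => dualObj lam x φ αstar
        - dualObj lam x φ (traj step z idx t))
        = ExpIdx hn t (fun _ => Dstar)
          - ExpIdx hn t (fun idx => dualObj lam x φ (traj step z idx t)) :=
      SDCAaux.expIdx_sub hn t _ _
    rw [h1, SDCAaux.expIdx_const]
    exact hepred t ht
end

section
/- SDCA convergence for smooth losses, averaged output (Theorem 2, second part): Assume each φ_i is (1/γ)-smooth and convex (γ > 0), together with the standing assumptions, and run the SDCA process with α^(0) = 0. Let ε_P > 0 and let T > T_0 be integers with T_0 ≥ (n + 1/(λγ)) · log((n + 1/(λγ)) / ((T − T_0) ε_P)). Let ᾱ = (1/(T−T_0))∑_{t=T_0+1}^{T} α^(t−1) and w̄ = w(ᾱ) (or, alternatively, ᾱ = α^(t), w̄ = w^(t) for t drawn uniformly from {T_0+1,…,T}, with the expectation also over this t). Then E[P(w̄) − D(ᾱ)] ≤ ε_P. -/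
open scoped BigOperators RealInnerProductSpace
open Finset

namespace SDCAAux

lemma fenchel {φ : ℝ → ℝ} {u : ℝ} (h : FiniteConj φ u) (z : ℝ) :
    z * u - φ z ≤ fconj φ u := le_ciSup h z

lemma subgrad_deriv {φ : ℝ → ℝ} (hc : ConvexOn ℝ Set.univ φ)
    (hd : Differentiable ℝ φ) (a : ℝ) : IsSubgrad φ a (deriv φ a) := by
  intro b
  rcases lt_trichotomy a b with h | h | h
  · have := hc.deriv_le_slope (Set.mem_univ a) (Set.mem_univ b) h (hd a)
    rw [slope_def_field] at this
    have hba : 0 < b - a := by linarith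
    rw [le_div_iff₀ hba] at this; linarith
  · simp [h]
  · have := hc.slope_le_deriv (Set.mem_univ b) (Set.mem_univ a) h (hd a)
    rw [slope_def_field] at this
    have hba : 0 < a - b := by linarith
    rw [div_le_iff₀ hba] at this; nlinarith

lemma finiteConj_subgrad {φ : ℝ → ℝ} {a g : ℝ} (h : IsSubgrad φ a g) :
    FiniteConj φ g := by
  refine ⟨a * g - φ a, ?_⟩
  rintro _ ⟨z, rfl⟩
  have := h z; dsimp; nlinarith

lemma fconj_subgrad {φ : ℝ → ℝ} {a g : ℝ} (h : IsSubgrad φ a g) :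
    fconj φ g = a * g - φ a := by
  refine le_antisymm (ciSup_le fun z => ?_) (le_ciSup (finiteConj_subgrad h) a)
  have := h z; nlinarith

lemma smooth_upper {φ : ℝ → ℝ} {γ : ℝ} (hγ : 0 < γ) (hd : Differentiable ℝ φ)
    (hder : ∀ a b, |deriv φ a - deriv φ b| ≤ (1 / γ) * |a - b|) (a b : ℝ) :
    φ b ≤ φ a + deriv φ a * (b - a) + 1 / (2 * γ) * (b - a) ^ 2 := by
  set h : ℝ → ℝ := fun t => φ a + deriv φ a * (t - a) + 1 / (2 * γ) * (t - a) ^ 2 - φ t with hh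
  have hderiv : ∀ t, HasDerivAt h (deriv φ a + 1 / γ * (t - a) - deriv φ t) t := by
    intro t
    have h1 : HasDerivAt (fun t : ℝ => t - a) 1 t := (hasDerivAt_id t).sub_const a
    have h2 : HasDerivAt (fun t : ℝ => (t - a) ^ 2) (2 * (t - a)) t := by
      simpa using (h1.fun_pow 2)
    have h3 := (((hasDerivAt_const t (φ a)).add (h1.const_mul (deriv φ a))).add
        (h2.const_mul (1 / (2 * γ)))).sub (hd t).hasDerivAt
    have heq : 0 + deriv φ a * 1 + 1 / (2 * γ) * (2 * (t - a)) - deriv φ t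
        = deriv φ a + 1 / γ * (t - a) - deriv φ t := by
      field_simp; ring
    rw [heq] at h3
    exact h3
  have key : 0 ≤ h b := by
    have h0 : h a = 0 := by simp [hh]
    rcases le_total a b with hab | hab
    · have mono : MonotoneOn h (Set.Ici a) := by
        apply monotoneOn_of_deriv_nonneg (convex_Ici a)
          (fun t _ => ((hderiv t).continuousAt.continuousWithinAt))
          (fun t ht => ((hderiv t).differentiableAt.differentiableWithinAt))
        intro t ht
        rw [interior_Ici] at ht
        rw [(hderiv t).deriv]
        have h4 := hder t a
        rw [abs_of_nonneg (by linarith [Set.mem_Ioi.mp ht] : (0:ℝ) ≤ t - a)] at h4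
        have habs := (abs_le.mp h4).2
        linarith
      have := mono (Set.self_mem_Ici) (Set.mem_Ici.mpr hab) hab
      linarith [h0 ▸ this]
    · have anti : AntitoneOn h (Set.Iic a) := by
        apply antitoneOn_of_deriv_nonpos (convex_Iic a)
          (fun t _ => ((hderiv t).continuousAt.continuousWithinAt))
          (fun t ht => ((hderiv t).differentiableAt.differentiableWithinAt))
        intro t ht
        rw [interior_Iic] at ht
        rw [(hderiv t).deriv]
        have h4 := hder a t
        rw [abs_of_nonneg (by linarith [Set.mem_Iio.mp ht] : (0:ℝ) ≤ a - t)] at h4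
        have habs := (abs_le.mp h4).2
        linarith
      have := anti (Set.mem_Iic.mpr hab) (Set.self_mem_Iic) hab
      linarith [h0 ▸ this]
  simp only [hh] at key; linarith

lemma fconj_strong {φ : ℝ → ℝ} {γ : ℝ} (hγ : 0 < γ) (hd : Differentiable ℝ φ)
    (hder : ∀ a b, |deriv φ a - deriv φ b| ≤ (1 / γ) * |a - b|)
    {p q s : ℝ} (hs0 : 0 ≤ s) (hs1 : s ≤ 1)
    (hp : FiniteConj φ p) (hq : FiniteConj φ q) :
    fconj φ ((1 - s) * p + s * q)
      ≤ (1 - s) * fconj φ p + s * fconj φ q - γ / 2 * s * (1 - s) * (p - q) ^ 2 := by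
  apply ciSup_le
  intro z
  set z₁ := z + s * γ * (p - q) with hz1
  set z₂ := z - (1 - s) * γ * (p - q) with hz2
  have A := fenchel hp z₁
  have B := fenchel hq z₂
  have h1 := smooth_upper hγ hd hder z z₁
  have h2 := smooth_upper hγ hd hder z z₂
  have e1 : 1 / (2 * γ) * (z₁ - z) ^ 2 = γ / 2 * s ^ 2 * (p - q) ^ 2 := by
    rw [hz1]; field_simp; ring
  have e2 : 1 / (2 * γ) * (z₂ - z) ^ 2 = γ / 2 * (1 - s) ^ 2 * (p - q) ^ 2 := by
    rw [hz2]; field_simp; ring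
  rw [e1] at h1; rw [e2] at h2
  have hA := mul_le_mul_of_nonneg_left A (by linarith : (0:ℝ) ≤ 1 - s)
  have hB := mul_le_mul_of_nonneg_left B hs0
  have hh1 := mul_le_mul_of_nonneg_left h1 (by linarith : (0:ℝ) ≤ 1 - s)
  have hh2 := mul_le_mul_of_nonneg_left h2 hs0
  simp only [hz1, hz2] at hA hB hh1 hh2
  nlinarith [hA, hB, hh1, hh2]

lemma finiteConj_combo {φ : ℝ → ℝ} {p q s : ℝ} (hs0 : 0 ≤ s) (hs1 : s ≤ 1)
    (hp : FiniteConj φ p) (hq : FiniteConj φ q) :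
    FiniteConj φ ((1 - s) * p + s * q) := by
  obtain ⟨Bp, hBp⟩ := hp
  obtain ⟨Bq, hBq⟩ := hq
  refine ⟨(1 - s) * Bp + s * Bq, ?_⟩
  rintro _ ⟨z, rfl⟩
  have h1 := hBp ⟨z, rfl⟩
  have h2 := hBq ⟨z, rfl⟩
  dsimp at h1 h2 ⊢
  nlinarith

end SDCAAux

namespace SDCAAux

variable {n d : ℕ}

lemma wvec_smul_sum (lam : ℝ) (x : Fin n → EuclideanSpace ℝ (Fin d))
    {ι : Type*} (s : Finset ι) (c : ℝ) (β : ι → (Fin n → ℝ)) :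
    wvec lam x (c • ∑ t ∈ s, β t) = c • ∑ t ∈ s, wvec lam x (β t) := by
  unfold wvec
  simp only [Pi.smul_apply, Finset.sum_apply, smul_eq_mul, Finset.mul_sum,
    Finset.sum_smul, Finset.smul_sum, smul_smul]
  rw [Finset.sum_comm]
  exact Finset.sum_congr rfl fun t _ => Finset.sum_congr rfl fun i _ => by
    congr 1; ring

lemma wvec_update (lam : ℝ) (x : Fin n → EuclideanSpace ℝ (Fin d))
    (α : Fin n → ℝ) (i : Fin n) (c : ℝ) :
    wvec lam x (Function.update α i c)
      = wvec lam x α + ((c - α i) / (lam * n)) • x i := by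
  unfold wvec
  have h : ∑ j, Function.update α i c j • x j
      = (∑ j, α j • x j) + (c - α i) • x i := by
    have h1 : ∀ j, Function.update α i c j • x j
        = α j • x j + (Function.update α i c j - α j) • x j := by
      intro j; rw [← add_smul]; ring_nf
    rw [Finset.sum_congr rfl (fun j _ => h1 j), Finset.sum_add_distrib]
    congr 1
    rw [Fintype.sum_eq_single i]
    · simp
    · intro j hj; rw [Function.update_of_ne hj]; simp
  rw [h, smul_add, smul_smul]
  congr 1
  rw [div_eq_mul_inv]; ring_nf

lemma inner_wvec (lam : ℝ) (x : Fin n → EuclideanSpace ℝ (Fin d))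
    (α : Fin n → ℝ) (w : EuclideanSpace ℝ (Fin d)) :
    ⟪wvec lam x α, w⟫ = (1 / (lam * n)) * ∑ i, α i * ⟪x i, w⟫ := by
  unfold wvec
  rw [real_inner_smul_left, sum_inner]
  congr 1
  exact Finset.sum_congr rfl fun i _ => real_inner_smul_left _ _ _

lemma lam_norm_sq (hn : 0 < n) (lam : ℝ) (hlam : 0 < lam)
    (x : Fin n → EuclideanSpace ℝ (Fin d)) (α : Fin n → ℝ) :
    lam * ‖wvec lam x α‖ ^ 2 = (1 / n) * ∑ i, α i * ⟪x i, wvec lam x α⟫ := by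
  rw [← real_inner_self_eq_norm_sq, inner_wvec lam x α]
  have h1 : (lam : ℝ) ≠ 0 := ne_of_gt hlam
  have h2 : (n : ℝ) ≠ 0 := Nat.cast_ne_zero.mpr hn.ne'
  field_simp

lemma gap_eq (hn : 0 < n) (lam : ℝ) (hlam : 0 < lam)
    (x : Fin n → EuclideanSpace ℝ (Fin d)) (φ : Fin n → ℝ → ℝ) (α : Fin n → ℝ) :
    primalObj lam x φ (wvec lam x α) - dualObj lam x φ α
      = (1 / n) * ∑ i, (φ i ⟪x i, wvec lam x α⟫ + fconj (φ i) (-(α i))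
          + α i * ⟪x i, wvec lam x α⟫) := by
  unfold primalObj dualObj
  have h := lam_norm_sq hn lam hlam x α
  rw [Finset.sum_add_distrib, Finset.sum_add_distrib, mul_add, mul_add]
  rw [Finset.sum_neg_distrib]
  linarith

lemma weak_duality (hn : 0 < n) (lam : ℝ) (hlam : 0 < lam)
    (x : Fin n → EuclideanSpace ℝ (Fin d)) (φ : Fin n → ℝ → ℝ)
    {α : Fin n → ℝ} (hα : Feas φ α) (w : EuclideanSpace ℝ (Fin d)) :
    dualObj lam x φ α ≤ primalObj lam x φ w := by
  unfold dualObj primalObj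
  have key : ∀ i, -(fconj (φ i) (-(α i))) ≤ φ i ⟪x i, w⟫ + α i * ⟪x i, w⟫ := by
    intro i
    have := SDCAAux.fenchel (hα i) ⟪x i, w⟫
    nlinarith
  have h1 : (1 / (n:ℝ)) * ∑ i, -(fconj (φ i) (-(α i)))
      ≤ (1 / (n:ℝ)) * ∑ i, (φ i ⟪x i, w⟫ + α i * ⟪x i, w⟫) := by
    apply mul_le_mul_of_nonneg_left (Finset.sum_le_sum fun i _ => key i)
    positivity
  have h2 : (1 / (n:ℝ)) * ∑ i, α i * ⟪x i, w⟫ = lam * ⟪wvec lam x α, w⟫ := by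
    rw [inner_wvec lam x α w]
    have hl : (lam : ℝ) ≠ 0 := ne_of_gt hlam
    have hnn : (n : ℝ) ≠ 0 := Nat.cast_ne_zero.mpr hn.ne'
    field_simp
  have h3 : lam * ⟪wvec lam x α, w⟫
      ≤ lam / 2 * ‖wvec lam x α‖ ^ 2 + lam / 2 * ‖w‖ ^ 2 := by
    have hcs : ⟪wvec lam x α, w⟫ ≤ ‖wvec lam x α‖ * ‖w‖ := real_inner_le_norm _ _
    nlinarith [sq_nonneg (‖wvec lam x α‖ - ‖w‖), hlam.le, norm_nonneg (wvec lam x α),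
      norm_nonneg w, mul_le_mul_of_nonneg_left hcs hlam.le]
  rw [Finset.sum_add_distrib, mul_add] at h1
  linarith

end SDCAAux

namespace SDCAAux

variable {n d : ℕ}

lemma dual_update' (hn : 0 < n) (lam : ℝ) (hlam : 0 < lam)
    (x : Fin n → EuclideanSpace ℝ (Fin d)) (φ : Fin n → ℝ → ℝ)
    (α : Fin n → ℝ) (i : Fin n) (c : ℝ) :
    dualObj lam x φ (Function.update α i c)
      = dualObj lam x φ α + (1 / n) * (fconj (φ i) (-(α i)) - fconj (φ i) (-c)
          - (c - α i) * ⟪x i, wvec lam x α⟫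
          - (c - α i) ^ 2 * ‖x i‖ ^ 2 * (1 / (2 * lam * n))) := by
  have hl : (lam : ℝ) ≠ 0 := ne_of_gt hlam
  have hnn : (n : ℝ) ≠ 0 := Nat.cast_ne_zero.mpr hn.ne'
  unfold dualObj
  rw [wvec_update lam x α i c]
  have hnorm : ‖wvec lam x α + ((c - α i) / (lam * n)) • x i‖ ^ 2
      = ‖wvec lam x α‖ ^ 2 + 2 * ((c - α i) / (lam * n)) * ⟪x i, wvec lam x α⟫
        + ((c - α i) / (lam * n)) ^ 2 * ‖x i‖ ^ 2 := by
    rw [norm_add_sq_real, real_inner_smul_right, real_inner_comm, norm_smul]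
    rw [Real.norm_eq_abs, mul_pow, sq_abs]
    ring
  have hsum : ∑ j, -(fconj (φ j) (-(Function.update α i c j)))
      = (∑ j, -(fconj (φ j) (-(α j)))) + (fconj (φ i) (-(α i)) - fconj (φ i) (-c)) := by
    have h1 : ∑ j, -(fconj (φ j) (-(Function.update α i c j)))
        = ∑ j, (-(fconj (φ j) (-(α j)))
            + (-(fconj (φ j) (-(Function.update α i c j))) - -(fconj (φ j) (-(α j))))) := by
      exact Finset.sum_congr rfl fun j _ => by ring
    rw [h1, Finset.sum_add_distrib]
    congr 1
    rw [Fintype.sum_eq_single i]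
    · rw [Function.update_self]; ring
    · intro j hj; rw [Function.update_of_ne hj]; ring
  rw [hnorm, hsum]
  have e1 : lam / 2 * (2 * ((c - α i) / (lam * n)) * ⟪x i, wvec lam x α⟫)
      = (1 / n) * ((c - α i) * ⟪x i, wvec lam x α⟫) := by
    field_simp
  have e2 : lam / 2 * (((c - α i) / (lam * n)) ^ 2 * ‖x i‖ ^ 2)
      = (1 / n) * ((c - α i) ^ 2 * ‖x i‖ ^ 2 * (1 / (2 * lam * n))) := by
    field_simp
  rw [mul_add, mul_add, mul_add, e1, e2]
  ring

lemma improve (hn : 0 < n) (lam : ℝ) (hlam : 0 < lam) (γ : ℝ) (hγ : 0 < γ)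
    (x : Fin n → EuclideanSpace ℝ (Fin d)) (φ : Fin n → ℝ → ℝ)
    (hconv : ∀ i, ConvexOn ℝ Set.univ (φ i))
    (hdiff : ∀ i, Differentiable ℝ (φ i))
    (hder : ∀ i, ∀ a b : ℝ, |deriv (φ i) a - deriv (φ i) b| ≤ (1 / γ) * |a - b|)
    (hx : ∀ i, ‖x i‖ ≤ 1)
    (step : (Fin n → ℝ) → Fin n → (Fin n → ℝ))
    (hstep_max : ∀ α i c, Feas φ (Function.update α i c) →
      dualObj lam x φ (Function.update α i c) ≤ dualObj lam x φ (step α i))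
    {α : Fin n → ℝ} (hα : Feas φ α) (i : Fin n) :
    dualObj lam x φ α + (lam * γ * n / (1 + lam * γ * n) / n)
        * (φ i ⟪x i, wvec lam x α⟫ + fconj (φ i) (-(α i))
            + α i * ⟪x i, wvec lam x α⟫)
      ≤ dualObj lam x φ (step α i) := by
  set s₀ : ℝ := lam * γ * n / (1 + lam * γ * n) with hs₀
  have hpos : (0:ℝ) < lam * γ * n := by
    have : (0:ℝ) < (n:ℝ) := Nat.cast_pos.mpr hn
    positivity
  have hden : (0:ℝ) < 1 + lam * γ * n := by linarith
  have hs0 : 0 ≤ s₀ := by positivity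
  have hs1 : s₀ ≤ 1 := by
    rw [hs₀, div_le_one hden]; linarith
  set a : ℝ := ⟪x i, wvec lam x α⟫ with ha
  set u : ℝ := deriv (φ i) a with hu
  set c : ℝ := (1 - s₀) * α i - s₀ * u with hc
  have hsub : IsSubgrad (φ i) a u := subgrad_deriv (hconv i) (hdiff i) a
  have hcc : (1 - s₀) * (-(α i)) + s₀ * u = -c := by rw [hc]; ring
  have hfc : Feas φ (Function.update α i c) := by
    intro j
    by_cases hji : j = i
    · subst hji
      rw [Function.update_self, ← hcc]
      exact finiteConj_combo hs0 hs1 (hα j) (finiteConj_subgrad hsub)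
    · rw [Function.update_of_ne hji]; exact hα j
  refine le_trans ?_ (hstep_max α i c hfc)
  rw [dual_update' hn lam hlam x φ α i c]
  rw [← ha]
  have S := fconj_strong hγ (hdiff i) (hder i) hs0 hs1 (hα i) (finiteConj_subgrad hsub)
    (p := -(α i)) (q := u)
  rw [hcc] at S
  have hF : fconj (φ i) u = a * u - φ i a := fconj_subgrad hsub
  rw [hF] at S
  have hX0 : (0:ℝ) ≤ ‖x i‖ ^ 2 := sq_nonneg _
  have hX1 : ‖x i‖ ^ 2 ≤ 1 := by
    have := hx i
    nlinarith [norm_nonneg (x i)]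
  set K : ℝ := u + α i with hK
  have coeff : s₀ * (1 / (2 * lam * n)) = γ / 2 * (1 - s₀) := by
    rw [hs₀]
    have hl : (lam : ℝ) ≠ 0 := ne_of_gt hlam
    have hnn : (n : ℝ) ≠ 0 := Nat.cast_ne_zero.mpr hn.ne'
    field_simp
    ring
  have key : s₀ ^ 2 * K ^ 2 * ‖x i‖ ^ 2 * (1 / (2 * lam * n))
      ≤ γ / 2 * s₀ * (1 - s₀) * K ^ 2 := by
    have h1 : s₀ ^ 2 * K ^ 2 * ‖x i‖ ^ 2 * (1 / (2 * lam * n))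
        = (s₀ * K ^ 2 * ‖x i‖ ^ 2) * (s₀ * (1 / (2 * lam * n))) := by ring
    rw [h1, coeff]
    have h1s : (0:ℝ) ≤ 1 - s₀ := by linarith
    have hA : 0 ≤ s₀ * K ^ 2 * (γ / 2 * (1 - s₀)) :=
      mul_nonneg (mul_nonneg hs0 (sq_nonneg K)) (mul_nonneg (by positivity) h1s)
    have hprod := mul_nonneg hA (by linarith : (0:ℝ) ≤ 1 - ‖x i‖ ^ 2)
    nlinarith [hprod]
  have hΔ : c - α i = -(s₀ * K) := by rw [hc, hK]; ring
  have hΔ2 : (c - α i) ^ 2 = s₀ ^ 2 * K ^ 2 := by rw [hΔ]; ring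
  have hq : (-(α i) - u) ^ 2 = K ^ 2 := by rw [hK]; ring
  rw [hq] at S
  -- now conclude by linear arithmetic
  have hbr : s₀ * (φ i a + fconj (φ i) (-(α i)) + α i * a)
      ≤ fconj (φ i) (-(α i)) - fconj (φ i) (-c)
        - (c - α i) * a - (c - α i) ^ 2 * ‖x i‖ ^ 2 * (1 / (2 * lam * n)) := by
    rw [hΔ2]
    have hΔa : (c - α i) * a = -(s₀ * K * a) := by rw [hΔ]; ring
    rw [hΔa]
    have hKa : s₀ * K * a = s₀ * u * a + s₀ * (α i) * a := by rw [hK]; ring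
    linarith [S, key, hKa]
  have hmul := mul_le_mul_of_nonneg_left hbr (by positivity : (0:ℝ) ≤ 1 / (n:ℝ))
  set L : ℝ := 1 / (2 * lam * ↑n) with hL
  clear_value s₀ a u c K L
  ring_nf at hmul ⊢
  linarith [hmul]

lemma state_step (hn : 0 < n) (lam : ℝ) (hlam : 0 < lam) (γ : ℝ) (hγ : 0 < γ)
    (x : Fin n → EuclideanSpace ℝ (Fin d)) (φ : Fin n → ℝ → ℝ)
    (hconv : ∀ i, ConvexOn ℝ Set.univ (φ i))
    (hdiff : ∀ i, Differentiable ℝ (φ i))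
    (hder : ∀ i, ∀ a b : ℝ, |deriv (φ i) a - deriv (φ i) b| ≤ (1 / γ) * |a - b|)
    (hx : ∀ i, ‖x i‖ ≤ 1)
    (step : (Fin n → ℝ) → Fin n → (Fin n → ℝ))
    (hstep_max : ∀ α i c, Feas φ (Function.update α i c) →
      dualObj lam x φ (Function.update α i c) ≤ dualObj lam x φ (step α i))
    {α : Fin n → ℝ} (hα : Feas φ α) :
    (n:ℝ) * dualObj lam x φ α + (lam * γ * n / (1 + lam * γ * n))
        * (primalObj lam x φ (wvec lam x α) - dualObj lam x φ α)
      ≤ ∑ i, dualObj lam x φ (step α i) := by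
  have himp := fun i => improve hn lam hlam γ hγ x φ hconv hdiff hder hx step hstep_max hα i
  have hsum := Finset.sum_le_sum (fun i (_ : i ∈ Finset.univ) => himp i)
  rw [Finset.sum_add_distrib, Finset.sum_const, Finset.card_univ, Fintype.card_fin,
    ← Finset.mul_sum] at hsum
  have hgap := gap_eq hn lam hlam x φ α
  set s₀ : ℝ := lam * γ * n / (1 + lam * γ * n) with hs₀
  have hnn : (n : ℝ) ≠ 0 := Nat.cast_ne_zero.mpr hn.ne'
  have e : s₀ / n * ∑ i, (φ i ⟪x i, wvec lam x α⟫ + fconj (φ i) (-(α i))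
      + α i * ⟪x i, wvec lam x α⟫)
      = s₀ * (primalObj lam x φ (wvec lam x α) - dualObj lam x φ α) := by
    rw [hgap]
    field_simp
  rw [e] at hsum
  simpa [nsmul_eq_mul] using hsum

end SDCAAux

namespace SDCAAux

variable {n : ℕ}

/-- Extension of a finite index tuple by the default index. -/
def ext (hn : 0 < n) (t : ℕ) (idx : Fin t → Fin n) : ℕ → Fin n :=
  fun k => if h : k < t then idx ⟨k, h⟩ else ⟨0, hn⟩

lemma expIdx_def (hn : 0 < n) (t : ℕ) (g : (ℕ → Fin n) → ℝ) :
    ExpIdx hn t g = (∑ idx : Fin t → Fin n, g (ext hn t idx)) / (n : ℝ) ^ t := rfl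

lemma ext_snoc (hn : 0 < n) (t : ℕ) (f : Fin t → Fin n) (a : Fin n) :
    ext hn (t + 1) (Fin.snoc f a) = Function.update (ext hn t f) t a := by
  funext k
  rcases lt_trichotomy k t with h | h | h
  · rw [Function.update_of_ne (Nat.ne_of_lt h)]
    unfold ext
    rw [dif_pos (Nat.lt_succ_of_lt h), dif_pos h]
    have : (⟨k, Nat.lt_succ_of_lt h⟩ : Fin (t+1)) = Fin.castSucc ⟨k, h⟩ := rfl
    rw [this, Fin.snoc_castSucc]
  · subst h
    rw [Function.update_self]
    unfold ext
    rw [dif_pos (Nat.lt_succ_self k)]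
    have : (⟨k, Nat.lt_succ_self k⟩ : Fin (k+1)) = Fin.last k := rfl
    rw [this, Fin.snoc_last]
  · rw [Function.update_of_ne (Nat.ne_of_gt h)]
    unfold ext
    rw [dif_neg (by omega), dif_neg (by omega)]

lemma expIdx_succ (hn : 0 < n) (t : ℕ) (g : (ℕ → Fin n) → ℝ) :
    ExpIdx hn (t + 1) g
      = (∑ f : Fin t → Fin n, ∑ a : Fin n,
          g (Function.update (ext hn t f) t a)) / ((n : ℝ) ^ t * n) := by
  rw [expIdx_def]
  have he : ∑ idx : Fin (t+1) → Fin n, g (ext hn (t+1) idx)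
      = ∑ p : Fin n × (Fin t → Fin n), g (ext hn (t+1) (Fin.snocEquiv (fun _ => Fin n) p)) :=
    (Equiv.sum_comp (Fin.snocEquiv (fun _ => Fin n)) (fun idx => g (ext hn (t+1) idx))).symm
  rw [he, Fintype.sum_prod_type, Finset.sum_comm]
  rw [pow_succ]
  congr 1
  refine Finset.sum_congr rfl fun f _ => Finset.sum_congr rfl fun a _ => ?_
  congr 1
  have : Fin.snocEquiv (fun _ => Fin n) (a, f) = Fin.snoc f a := rfl
  rw [this, ext_snoc]

/-- `g` depends only on the first `t` coordinates. -/
def DependsOn (t : ℕ) (g : (ℕ → Fin n) → ℝ) : Prop :=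
  ∀ idx idx' : ℕ → Fin n, (∀ k, k < t → idx k = idx' k) → g idx = g idx'

lemma expIdx_stable (hn : 0 < n) {t : ℕ} {g : (ℕ → Fin n) → ℝ} (hg : DependsOn t g)
    {t' : ℕ} (htt' : t ≤ t') : ExpIdx hn t' g = ExpIdx hn t g := by
  induction t', htt' using Nat.le_induction with
  | base => rfl
  | succ t' htt' ih =>
    rw [expIdx_succ]
    have hval : ∀ f : Fin t' → Fin n, ∀ a : Fin n,
        g (Function.update (ext hn t' f) t' a) = g (ext hn t' f) := by
      intro f a
      apply hg
      intro k hk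
      rw [Function.update_of_ne]
      omega
    have : ∀ f : Fin t' → Fin n,
        ∑ a : Fin n, g (Function.update (ext hn t' f) t' a) = n * g (ext hn t' f) := by
      intro f
      rw [Finset.sum_congr rfl fun a _ => hval f a]
      simp [Finset.sum_const, mul_comm]
    rw [Finset.sum_congr rfl fun f _ => this f]
    have hne : (n:ℝ) ≠ 0 := Nat.cast_ne_zero.mpr hn.ne'
    calc (∑ f : Fin t' → Fin n, (n:ℝ) * g (ext hn t' f)) / ((n:ℝ)^t' * n)
        = (∑ f : Fin t' → Fin n, g (ext hn t' f)) / (n:ℝ)^t' := by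
          rw [← Finset.mul_sum]; field_simp
      _ = ExpIdx hn t' g := rfl
      _ = ExpIdx hn t g := ih

lemma expIdx_mono (hn : 0 < n) (t : ℕ) {g g' : (ℕ → Fin n) → ℝ}
    (h : ∀ idx, g idx ≤ g' idx) : ExpIdx hn t g ≤ ExpIdx hn t g' := by
  unfold ExpIdx
  have hpow : (0:ℝ) < (n:ℝ)^t := by
    have : (0:ℝ) < (n:ℝ) := Nat.cast_pos.mpr hn
    positivity
  apply div_le_div_of_nonneg_right ?_ hpow.le
  exact Finset.sum_le_sum fun i _ => h _

lemma expIdx_const (hn : 0 < n) (t : ℕ) (c : ℝ) :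
    ExpIdx hn t (fun _ => c) = c := by
  unfold ExpIdx
  rw [Finset.sum_const, Finset.card_univ]
  have hne : (n : ℝ) ≠ 0 := Nat.cast_ne_zero.mpr hn.ne'
  simp only [Fintype.card_fun, Fintype.card_fin, nsmul_eq_mul, Nat.cast_pow]
  field_simp

lemma expIdx_sub (hn : 0 < n) (t : ℕ) (g g' : (ℕ → Fin n) → ℝ) :
    ExpIdx hn t (fun idx => g idx - g' idx) = ExpIdx hn t g - ExpIdx hn t g' := by
  unfold ExpIdx
  rw [Finset.sum_sub_distrib, sub_div]

lemma expIdx_finsum (hn : 0 < n) (t : ℕ) {ι : Type*} (s : Finset ι)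
    (F : ι → (ℕ → Fin n) → ℝ) :
    ExpIdx hn t (fun idx => ∑ u ∈ s, F u idx) = ∑ u ∈ s, ExpIdx hn t (F u) := by
  unfold ExpIdx
  rw [Finset.sum_comm, Finset.sum_div]

lemma expIdx_smul (hn : 0 < n) (t : ℕ) (c : ℝ) (g : (ℕ → Fin n) → ℝ) :
    ExpIdx hn t (fun idx => c * g idx) = c * ExpIdx hn t g := by
  unfold ExpIdx
  rw [← Finset.mul_sum, mul_div_assoc]

lemma traj_depends {step : (Fin n → ℝ) → Fin n → (Fin n → ℝ)} {α0 : Fin n → ℝ}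
    {idx idx' : ℕ → Fin n} {t : ℕ} (h : ∀ k, k < t → idx k = idx' k) :
    traj step α0 idx t = traj step α0 idx' t := by
  induction t with
  | zero => rfl
  | succ t ih =>
    show step (traj step α0 idx t) (idx t) = step (traj step α0 idx' t) (idx' t)
    rw [ih (fun k hk => h k (Nat.lt_succ_of_lt hk)), h t (Nat.lt_succ_self t)]

lemma traj_feas {φ : Fin n → ℝ → ℝ} {step : (Fin n → ℝ) → Fin n → (Fin n → ℝ)}
    (hstep_feas : ∀ α i, Feas φ α → Feas φ (step α i))
    {α0 : Fin n → ℝ} (h0 : Feas φ α0) (idx : ℕ → Fin n) (t : ℕ) :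
    Feas φ (traj step α0 idx t) := by
  induction t with
  | zero => exact h0
  | succ t ih => exact hstep_feas _ _ ih

lemma traj_update {step : (Fin n → ℝ) → Fin n → (Fin n → ℝ)} {α0 : Fin n → ℝ}
    (hn : 0 < n) (t : ℕ) (f : Fin t → Fin n) (a : Fin n) :
    traj step α0 (Function.update (ext hn t f) t a) (t + 1)
      = step (traj step α0 (ext hn t f) t) a := by
  show step (traj step α0 (Function.update (ext hn t f) t a) t)
      (Function.update (ext hn t f) t a t) = _
  rw [Function.update_self]
  refine congrArg (fun β => step β a) (traj_depends fun k hk => ?_)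
  rw [Function.update_of_ne (by omega)]

end SDCAAux


namespace SDCAAux

variable {n d : ℕ}

lemma convexOn_norm_sq :
    ConvexOn ℝ Set.univ (fun w : EuclideanSpace ℝ (Fin d) => ‖w‖ ^ 2) := by
  constructor
  · exact convex_univ
  · intro v _ w _ a b ha hb hab
    simp only [smul_eq_mul]
    have h1 : ‖a • v + b • w‖ ≤ a * ‖v‖ + b * ‖w‖ := by
      calc ‖a • v + b • w‖ ≤ ‖a • v‖ + ‖b • w‖ := norm_add_le _ _
        _ = a * ‖v‖ + b * ‖w‖ := by
            rw [norm_smul, norm_smul, Real.norm_eq_abs, Real.norm_eq_abs,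
              abs_of_nonneg ha, abs_of_nonneg hb]
    have h2 : ‖a • v + b • w‖ ^ 2 ≤ (a * ‖v‖ + b * ‖w‖) ^ 2 := by
      have := norm_nonneg (a • v + b • w)
      nlinarith [h1]
    nlinarith [sq_nonneg (‖v‖ - ‖w‖), mul_nonneg ha hb, h2]

lemma fconj_sum_le {φ : ℝ → ℝ} {ι : Type*} {s : Finset ι} {w p : ι → ℝ}
    (hw : ∀ t ∈ s, 0 ≤ w t) (h1 : ∑ t ∈ s, w t = 1)
    (hp : ∀ t ∈ s, FiniteConj φ (p t)) :
    fconj φ (∑ t ∈ s, w t * p t) ≤ ∑ t ∈ s, w t * fconj φ (p t) := by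
  apply ciSup_le
  intro z
  have key : z * (∑ t ∈ s, w t * p t) - φ z
      = ∑ t ∈ s, w t * (z * p t - φ z) := by
    have h2 : ∑ t ∈ s, w t * (z * p t - φ z)
        = (∑ t ∈ s, w t * (z * p t)) - (∑ t ∈ s, w t) * φ z := by
      rw [Finset.sum_mul, ← Finset.sum_sub_distrib]
      exact Finset.sum_congr rfl fun t _ => by ring
    rw [h2, h1, one_mul, Finset.mul_sum]
    congr 1
    exact Finset.sum_congr rfl fun t _ => by ring
  rw [key]
  exact Finset.sum_le_sum fun t ht =>
    mul_le_mul_of_nonneg_left (fenchel (hp t ht) z) (hw t ht)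

lemma feas_zero (φ : Fin n → ℝ → ℝ) (hφ0 : ∀ i a, 0 ≤ φ i a) :
    Feas φ (fun _ => 0) := by
  intro i
  refine ⟨0, ?_⟩
  rintro _ ⟨z, rfl⟩
  dsimp
  have := hφ0 i z
  nlinarith

lemma dual_zero_nonneg (hn : 0 < n) (lam : ℝ) (hlam : 0 < lam)
    (x : Fin n → EuclideanSpace ℝ (Fin d)) (φ : Fin n → ℝ → ℝ)
    (hφ0 : ∀ i a, 0 ≤ φ i a) :
    0 ≤ dualObj lam x φ (fun _ => 0) := by
  unfold dualObj
  have hw : wvec lam x (fun _ => 0) = 0 := by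
    unfold wvec; simp
  rw [hw]
  simp only [norm_zero]
  have hterm : ∀ i : Fin n, 0 ≤ -(fconj (φ i) (-(0:ℝ))) := by
    intro i
    have : fconj (φ i) (-(0:ℝ)) ≤ 0 := by
      apply ciSup_le
      intro z
      have := hφ0 i z
      nlinarith
    linarith
  have hsum : (0:ℝ) ≤ ∑ i : Fin n, -(fconj (φ i) (-(0:ℝ))) :=
    Finset.sum_nonneg fun i _ => hterm i
  have h0 : (0:ℝ) ≤ 1 / (n:ℝ) := by positivity
  nlinarith [mul_nonneg h0 hsum]

lemma primal_zero_le (hn : 0 < n) (lam : ℝ) (hlam : 0 < lam)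
    (x : Fin n → EuclideanSpace ℝ (Fin d)) (φ : Fin n → ℝ → ℝ)
    (hφ1 : ∀ i, φ i 0 ≤ 1) :
    primalObj lam x φ 0 ≤ 1 := by
  unfold primalObj
  have hin : ∀ i : Fin n, ⟪x i, (0 : EuclideanSpace ℝ (Fin d))⟫ = (0:ℝ) :=
    fun i => inner_zero_right _
  have hsum : ∑ i, φ i ⟪x i, (0 : EuclideanSpace ℝ (Fin d))⟫ ≤ (n:ℝ) := by
    calc ∑ i, φ i ⟪x i, (0 : EuclideanSpace ℝ (Fin d))⟫
        ≤ ∑ _i : Fin n, (1:ℝ) := Finset.sum_le_sum fun i _ => by rw [hin i]; exact hφ1 i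
      _ = (n:ℝ) := by simp
  simp only [norm_zero]
  have hne : (0:ℝ) < (n:ℝ) := Nat.cast_pos.mpr hn
  have h1 : (1 / (n:ℝ)) * ∑ i, φ i ⟪x i, (0 : EuclideanSpace ℝ (Fin d))⟫ ≤ 1 := by
    rw [div_mul_eq_mul_div, one_mul, div_le_one hne]
    exact hsum
  nlinarith [h1]

lemma mul_sum_sum {ι κ : Type*} (s : Finset ι) (u : Finset κ) (c r : ℝ) (f : ι → κ → ℝ) :
    c * ∑ t ∈ s, (r * ∑ i ∈ u, f t i) = r * ∑ i ∈ u, ∑ t ∈ s, c * f t i := by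
  simp only [Finset.mul_sum]
  rw [Finset.sum_comm]
  exact Finset.sum_congr rfl fun i _ => Finset.sum_congr rfl fun t _ => by ring

/-- Pointwise Jensen: duality gap of the averaged dual vector. -/
lemma gap_avg (hn : 0 < n) (lam : ℝ) (hlam : 0 < lam)
    (x : Fin n → EuclideanSpace ℝ (Fin d)) (φ : Fin n → ℝ → ℝ)
    (hconv : ∀ i, ConvexOn ℝ Set.univ (φ i))
    {ι : Type*} {s : Finset ι} (hs : s.Nonempty) (β : ι → (Fin n → ℝ))
    (hβ : ∀ t ∈ s, Feas φ (β t)) :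
    primalObj lam x φ (wvec lam x ((1 / (s.card : ℝ)) • ∑ t ∈ s, β t))
      - dualObj lam x φ ((1 / (s.card : ℝ)) • ∑ t ∈ s, β t)
    ≤ (1 / (s.card : ℝ)) * ∑ t ∈ s, (primalObj lam x φ (wvec lam x (β t))
        - dualObj lam x φ (β t)) := by
  set cm : ℝ := 1 / (s.card : ℝ) with hcm
  have hcard : (0:ℝ) < (s.card : ℝ) := by
    exact_mod_cast Finset.card_pos.mpr hs
  have hcm0 : 0 ≤ cm := by positivity
  have hcmsum : ∑ _t ∈ s, cm = 1 := by
    rw [Finset.sum_const, nsmul_eq_mul, hcm]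
    field_simp
  have hwv : wvec lam x (cm • ∑ t ∈ s, β t) = cm • ∑ t ∈ s, wvec lam x (β t) :=
    wvec_smul_sum lam x s cm β
  have hnorm : ‖cm • ∑ t ∈ s, wvec lam x (β t)‖ ^ 2
      ≤ ∑ t ∈ s, cm * ‖wvec lam x (β t)‖ ^ 2 := by
    have h : cm • ∑ t ∈ s, wvec lam x (β t) = ∑ t ∈ s, cm • wvec lam x (β t) :=
      Finset.smul_sum
    rw [h]
    exact convexOn_norm_sq.map_sum_le (fun t _ => hcm0) hcmsum (fun t _ => Set.mem_univ _)
  -- primal bound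
  have hP : primalObj lam x φ (wvec lam x (cm • ∑ t ∈ s, β t))
      ≤ cm * ∑ t ∈ s, primalObj lam x φ (wvec lam x (β t)) := by
    unfold primalObj
    rw [hwv]
    have hterm : ∀ i : Fin n,
        φ i ⟪x i, cm • ∑ t ∈ s, wvec lam x (β t)⟫
          ≤ ∑ t ∈ s, cm * φ i ⟪x i, wvec lam x (β t)⟫ := by
      intro i
      have hinner : ⟪x i, cm • ∑ t ∈ s, wvec lam x (β t)⟫
          = ∑ t ∈ s, cm • ⟪x i, wvec lam x (β t)⟫ := by
        simp only [real_inner_smul_right, inner_sum, Finset.mul_sum, smul_eq_mul]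
      rw [hinner]
      exact (hconv i).map_sum_le (fun t _ => hcm0) hcmsum (fun t _ => Set.mem_univ _)
    have h1 : (1 / (n:ℝ)) * ∑ i, φ i ⟪x i, cm • ∑ t ∈ s, wvec lam x (β t)⟫
        ≤ (1 / (n:ℝ)) * ∑ i, ∑ t ∈ s, cm * φ i ⟪x i, wvec lam x (β t)⟫ :=
      mul_le_mul_of_nonneg_left (Finset.sum_le_sum fun i _ => hterm i) (by positivity)
    have h2 : lam / 2 * ‖cm • ∑ t ∈ s, wvec lam x (β t)‖ ^ 2
        ≤ lam / 2 * ∑ t ∈ s, cm * ‖wvec lam x (β t)‖ ^ 2 :=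
      mul_le_mul_of_nonneg_left hnorm (by positivity)
    have e : cm * ∑ t ∈ s, ((1 / (n:ℝ)) * ∑ i, φ i ⟪x i, wvec lam x (β t)⟫
          + lam / 2 * ‖wvec lam x (β t)‖ ^ 2)
        = (1 / (n:ℝ)) * ∑ i, ∑ t ∈ s, cm * φ i ⟪x i, wvec lam x (β t)⟫
          + lam / 2 * ∑ t ∈ s, cm * ‖wvec lam x (β t)‖ ^ 2 := by
      rw [Finset.sum_add_distrib, mul_add]
      congr 1
      · exact mul_sum_sum s Finset.univ cm (1 / (n:ℝ))
          (fun t i => φ i ⟪x i, wvec lam x (β t)⟫)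
      · rw [Finset.mul_sum, Finset.mul_sum]
        exact Finset.sum_congr rfl fun t _ => by ring
    rw [e]
    linarith
  -- dual bound
  have hD : cm * ∑ t ∈ s, dualObj lam x φ (β t)
      ≤ dualObj lam x φ (cm • ∑ t ∈ s, β t) := by
    unfold dualObj
    rw [hwv]
    have hai : ∀ i : Fin n, -((cm • ∑ t ∈ s, β t) i) = ∑ t ∈ s, cm * (-(β t i)) := by
      intro i
      simp only [Pi.smul_apply, Finset.sum_apply, smul_eq_mul, Finset.mul_sum]
      rw [← Finset.sum_neg_distrib]
      exact Finset.sum_congr rfl fun t _ => by ring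
    have hterm : ∀ i : Fin n,
        fconj (φ i) (-((cm • ∑ t ∈ s, β t) i)) ≤ ∑ t ∈ s, cm * fconj (φ i) (-(β t i)) := by
      intro i
      rw [hai i]
      exact fconj_sum_le (fun t _ => hcm0) hcmsum (fun t ht => hβ t ht i)
    have h1 : (1 / (n:ℝ)) * ∑ i, (-(∑ t ∈ s, cm * fconj (φ i) (-(β t i))))
        ≤ (1 / (n:ℝ)) * ∑ i, -(fconj (φ i) (-((cm • ∑ t ∈ s, β t) i))) := by
      apply mul_le_mul_of_nonneg_left _ (by positivity : (0:ℝ) ≤ 1 / (n:ℝ))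
      exact Finset.sum_le_sum fun i _ => neg_le_neg (hterm i)
    have h2 : lam / 2 * ‖cm • ∑ t ∈ s, wvec lam x (β t)‖ ^ 2
        ≤ lam / 2 * ∑ t ∈ s, cm * ‖wvec lam x (β t)‖ ^ 2 :=
      mul_le_mul_of_nonneg_left hnorm (by positivity)
    have e : cm * ∑ t ∈ s, ((1 / (n:ℝ)) * ∑ i, -(fconj (φ i) (-(β t i)))
          - lam / 2 * ‖wvec lam x (β t)‖ ^ 2)
        = (1 / (n:ℝ)) * ∑ i, (-(∑ t ∈ s, cm * fconj (φ i) (-(β t i))))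
          - lam / 2 * ∑ t ∈ s, cm * ‖wvec lam x (β t)‖ ^ 2 := by
      rw [Finset.sum_sub_distrib, mul_sub]
      congr 1
      · have := mul_sum_sum s Finset.univ cm (1 / (n:ℝ))
          (fun t i => -(fconj (φ i) (-(β t i))))
        rw [this]
        congr 1
        refine Finset.sum_congr rfl fun i _ => ?_
        rw [← Finset.sum_neg_distrib]
        exact Finset.sum_congr rfl fun t _ => by ring
      · rw [Finset.mul_sum, Finset.mul_sum]
        exact Finset.sum_congr rfl fun t _ => by ring
    rw [e]
    linarith
  have hsplit : cm * ∑ t ∈ s, (primalObj lam x φ (wvec lam x (β t)) - dualObj lam x φ (β t))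
      = cm * ∑ t ∈ s, primalObj lam x φ (wvec lam x (β t))
        - cm * ∑ t ∈ s, dualObj lam x φ (β t) := by
    rw [Finset.sum_sub_distrib, mul_sub]
  rw [hsplit]
  linarith

end SDCAAux

namespace SDCAAux

lemma scalar_final (C m εP : ℝ) (T₀ : ℕ) (hC1 : 1 < C) (hm : 0 < m) (hεP : 0 < εP)
    (hT₀ : C * Real.log (C / (m * εP)) ≤ (T₀:ℝ)) :
    (1 / m) * (C * (1 - 1/C) ^ T₀) ≤ εP := by
    have hC0 : (0:ℝ) < C := by linarith
    have hpC : (0:ℝ) < 1 / C := by positivity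
    have h1C : 0 ≤ 1 - 1 / C := by
      have : 1 / C < 1 := by rw [div_lt_one hC0]; exact hC1
      linarith
    have hpow1 : (1 - 1/C) ^ T₀ ≤ 1 := pow_le_one₀ h1C (by linarith)
    have hpow0 : 0 ≤ (1 - 1/C) ^ T₀ := pow_nonneg h1C T₀
    by_cases hcase : C ≤ m * εP
    · have h1 : C * (1 - 1/C) ^ T₀ ≤ C := by nlinarith
      have h2 : (1/m) * C ≤ εP := by
        rw [one_div, inv_mul_le_iff₀ hm]
        nlinarith
      have h3 : (1/m) * (C * (1 - 1/C) ^ T₀) ≤ (1/m) * C :=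
        mul_le_mul_of_nonneg_left h1 (by positivity)
      linarith
    · push_neg at hcase
      have hmε : (0:ℝ) < m * εP := by positivity
      have hR1 : (1:ℝ) < C / (m * εP) := (one_lt_div hmε).mpr hcase
      have hlog : Real.log (C / (m * εP)) ≤ (T₀:ℝ) / C := by
        rw [le_div_iff₀ hC0]
        nlinarith [hT₀]
      have hexp : (1 - 1/C) ≤ Real.exp (-(1/C)) := by
        have := Real.add_one_le_exp (-(1/C))
        linarith
      have hpowe : (1 - 1/C) ^ T₀ ≤ Real.exp (-(1/C)) ^ T₀ :=
        pow_le_pow_left₀ h1C hexp T₀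
      have hexp2 : Real.exp (-(1/C)) ^ T₀ = Real.exp (-((T₀:ℝ)/C)) := by
        rw [← Real.exp_nat_mul]
        congr 1
        ring
      have hexp3 : Real.exp (-((T₀:ℝ)/C)) ≤ Real.exp (-Real.log (C / (m * εP))) := by
        apply Real.exp_le_exp.mpr
        linarith
      have hexp4 : Real.exp (-Real.log (C / (m * εP))) = m * εP / C := by
        rw [Real.exp_neg, Real.exp_log (by positivity), inv_div]
      have hfinal : (1 - 1/C) ^ T₀ ≤ m * εP / C := by
        rw [hexp2] at hpowe
        rw [hexp4] at hexp3
        linarith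
      have h5 : C * (1 - 1/C) ^ T₀ ≤ m * εP := by
        have h4 := mul_le_mul_of_nonneg_left hfinal hC0.le
        calc C * (1 - 1/C) ^ T₀ ≤ C * (m * εP / C) := h4
          _ = m * εP := by field_simp
      have h6 : (1/m) * (C * (1 - 1/C) ^ T₀) ≤ (1/m) * (m * εP) :=
        mul_le_mul_of_nonneg_left h5 (by positivity)
      have h7 : (1/m) * (m * εP) = εP := by field_simp
      linarith

end SDCAAux

set_option maxHeartbeats 1000000 in

open SDCAAux in
/-- Theorem 2 (second part): SDCA convergence for `(1/γ)`-smooth convex losses,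
averaged output. If `T > T₀ ≥ (n + 1/(λγ)) log((n + 1/(λγ))/((T-T₀) ε_P))`, then
the expected duality gap of the averaged iterate is at most `ε_P`. -/
theorem sdca_smooth_averaged
    (n d : ℕ) (hn : 0 < n)
    (x : Fin n → EuclideanSpace ℝ (Fin d))
    (φ : Fin n → ℝ → ℝ) (hconv : ∀ i, ConvexOn ℝ Set.univ (φ i))
    (lam : ℝ) (hlam : 0 < lam)
    (γ : ℝ) (hγ : 0 < γ)
    (hdiff : ∀ i, Differentiable ℝ (φ i))
    (hder : ∀ i, ∀ a b : ℝ, |deriv (φ i) a - deriv (φ i) b| ≤ (1 / γ) * |a - b|)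
    (hx : ∀ i, ‖x i‖ ≤ 1) (hφ0 : ∀ i a, 0 ≤ φ i a) (hφ1 : ∀ i, φ i 0 ≤ 1)
    (step : (Fin n → ℝ) → Fin n → (Fin n → ℝ))
    (hstep_off : ∀ α i j, j ≠ i → step α i j = α j)
    (hstep_feas : ∀ α i, Feas φ α → Feas φ (step α i))
    (hstep_max : ∀ α i c, Feas φ (Function.update α i c) →
      dualObj lam x φ (Function.update α i c) ≤ dualObj lam x φ (step α i))
    (εP : ℝ) (hεP : 0 < εP)
    (T₀ T : ℕ) (hTT : T₀ < T)
    (hT₀ : ((n : ℝ) + 1 / (lam * γ)) *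
        Real.log (((n : ℝ) + 1 / (lam * γ)) / (((T : ℝ) - T₀) * εP)) ≤ T₀) :
    ExpIdx hn T (fun idx =>
        primalObj lam x φ (wvec lam x
          ((1 / ((T : ℝ) - T₀)) • ∑ t ∈ Finset.Ico T₀ T, traj step (fun _ => 0) idx t))
        - dualObj lam x φ
          ((1 / ((T : ℝ) - T₀)) • ∑ t ∈ Finset.Ico T₀ T, traj step (fun _ => 0) idx t)) ≤ εP := by
  classical
  set α0 : Fin n → ℝ := fun _ => 0 with hα0
  have h0 : Feas φ α0 := feas_zero φ hφ0
  have hnR : (0:ℝ) < (n:ℝ) := Nat.cast_pos.mpr hn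
  have hnne : (n:ℝ) ≠ 0 := hnR.ne'
  have hn1 : (1:ℝ) ≤ (n:ℝ) := by exact_mod_cast hn
  set C : ℝ := (n:ℝ) + 1 / (lam * γ) with hC
  have hlg : (0:ℝ) < lam * γ := mul_pos hlam hγ
  have hC1 : 1 < C := by
    rw [hC]
    have : (0:ℝ) < 1 / (lam * γ) := by positivity
    linarith
  have hC0 : (0:ℝ) < C := by linarith
  set s₀ : ℝ := lam * γ * n / (1 + lam * γ * n) with hs₀
  have hs₀C : s₀ / n = 1 / C := by
    rw [hs₀, hC]
    have hden : (0:ℝ) < 1 + lam * γ * n := by positivity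
    field_simp
    ring
  -- the expected dual and gap sequences
  set D : ℕ → ℝ := fun t =>
    ExpIdx hn t (fun idx => dualObj lam x φ (traj step α0 idx t)) with hD
  set G : ℕ → ℝ := fun t =>
    ExpIdx hn t (fun idx => primalObj lam x φ (wvec lam x (traj step α0 idx t))
      - dualObj lam x φ (traj step α0 idx t)) with hG
  have hfeas : ∀ (idx : ℕ → Fin n) (t : ℕ), Feas φ (traj step α0 idx t) :=
    fun idx t => traj_feas hstep_feas h0 idx t
  -- D t ≤ 1
  have hD1 : ∀ t, D t ≤ 1 := by
    intro t
    have hpt : ∀ idx : ℕ → Fin n,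
        dualObj lam x φ (traj step α0 idx t) ≤ 1 := fun idx =>
      le_trans (weak_duality hn lam hlam x φ (hfeas idx t) 0)
        (primal_zero_le hn lam hlam x φ hφ1)
    calc D t ≤ ExpIdx hn t (fun _ => (1:ℝ)) := expIdx_mono hn t hpt
      _ = 1 := expIdx_const hn t 1
  have hD0 : 0 ≤ D 0 := by
    have hDeq : D 0 = dualObj lam x φ α0 := expIdx_const hn 0 _
    rw [hDeq, hα0]
    exact dual_zero_nonneg hn lam hlam x φ hφ0
  -- the supremum
  have hbdd : BddAbove (Set.range D) := ⟨1, by rintro _ ⟨t, rfl⟩; exact hD1 t⟩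
  set Dbar : ℝ := ⨆ t, D t with hDbar
  have hub : ∀ t, D t ≤ Dbar := fun t => le_ciSup hbdd t
  have hDbar1 : Dbar ≤ 1 := ciSup_le hD1
  -- recursion
  have hrec : ∀ t, D t + (1 / C) * G t ≤ D (t + 1) := by
    intro t
    have hei : D (t + 1)
        = (∑ f : Fin t → Fin n, ∑ a : Fin n,
            dualObj lam x φ (step (traj step α0 (ext hn t f) t) a)) / ((n:ℝ) ^ t * n) := by
      simp only [hD]
      rw [expIdx_succ hn t]
      congr 1
      refine Finset.sum_congr rfl fun f _ => Finset.sum_congr rfl fun a _ => ?_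
      rw [traj_update hn t f a]
    have hineq : ∀ f : Fin t → Fin n,
        (n:ℝ) * dualObj lam x φ (traj step α0 (ext hn t f) t)
          + s₀ * (primalObj lam x φ (wvec lam x (traj step α0 (ext hn t f) t))
              - dualObj lam x φ (traj step α0 (ext hn t f) t))
        ≤ ∑ a : Fin n, dualObj lam x φ (step (traj step α0 (ext hn t f) t) a) := by
      intro f
      exact state_step hn lam hlam γ hγ x φ hconv hdiff hder hx step hstep_max
        (hfeas (ext hn t f) t)
    have hsum := Finset.sum_le_sum
      (fun (f : Fin t → Fin n) (_ : f ∈ Finset.univ) => hineq f)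
    rw [Finset.sum_add_distrib, ← Finset.mul_sum, ← Finset.mul_sum] at hsum
    have hpow : (0:ℝ) < (n:ℝ) ^ t := by positivity
    have hDt : D t = (∑ f : Fin t → Fin n,
        dualObj lam x φ (traj step α0 (ext hn t f) t)) / (n:ℝ) ^ t := rfl
    have hGt : G t = (∑ f : Fin t → Fin n,
        (primalObj lam x φ (wvec lam x (traj step α0 (ext hn t f) t))
          - dualObj lam x φ (traj step α0 (ext hn t f) t))) / (n:ℝ) ^ t := rfl
    rw [hei, hDt, hGt, ← hs₀C]
    have e : (∑ f : Fin t → Fin n,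
          dualObj lam x φ (traj step α0 (ext hn t f) t)) / (n:ℝ) ^ t
        + s₀ / n * ((∑ f : Fin t → Fin n,
            (primalObj lam x φ (wvec lam x (traj step α0 (ext hn t f) t))
              - dualObj lam x φ (traj step α0 (ext hn t f) t))) / (n:ℝ) ^ t)
        = ((n:ℝ) * (∑ f : Fin t → Fin n,
              dualObj lam x φ (traj step α0 (ext hn t f) t))
            + s₀ * (∑ f : Fin t → Fin n,
              (primalObj lam x φ (wvec lam x (traj step α0 (ext hn t f) t))
                - dualObj lam x φ (traj step α0 (ext hn t f) t))))
          / ((n:ℝ) ^ t * n) := by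
      field_simp
    rw [e]
    exact div_le_div_of_nonneg_right hsum (by positivity)
  -- G t ≥ Dbar - D t
  have hGlb : ∀ t, Dbar - D t ≤ G t := by
    intro t
    have hPt : ∀ u, D u ≤ ExpIdx hn t
        (fun idx => primalObj lam x φ (wvec lam x (traj step α0 idx t))) := by
      intro u
      have hpt : ∀ idx : ℕ → Fin n,
          D u ≤ primalObj lam x φ (wvec lam x (traj step α0 idx t)) := by
        intro idx
        have hpw : ∀ idx' : ℕ → Fin n,
            dualObj lam x φ (traj step α0 idx' u)
              ≤ primalObj lam x φ (wvec lam x (traj step α0 idx t)) := fun idx' =>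
          weak_duality hn lam hlam x φ (hfeas idx' u) _
        calc D u ≤ ExpIdx hn u (fun _ =>
            primalObj lam x φ (wvec lam x (traj step α0 idx t))) := expIdx_mono hn u hpw
          _ = _ := expIdx_const hn u _
      calc D u = ExpIdx hn t (fun _ => D u) := (expIdx_const hn t _).symm
        _ ≤ _ := expIdx_mono hn t hpt
    have hGsplit : G t = ExpIdx hn t
        (fun idx => primalObj lam x φ (wvec lam x (traj step α0 idx t))) - D t := by
      rw [hG, hD]
      exact expIdx_sub hn t _ _
    have : ∀ u, D u ≤ G t + D t := fun u => by
      have := hPt u; rw [hGsplit]; linarith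
    have hDbarle : Dbar ≤ G t + D t := ciSup_le this
    linarith
  -- geometric decay
  have hdecay : ∀ t, Dbar - D t ≤ (1 - 1 / C) ^ t := by
    intro t
    induction t with
    | zero => simp only [pow_zero]; linarith [hDbar1, hD0]
    | succ t ih =>
      have h1C : 0 ≤ 1 - 1 / C := by
        have : 1 / C < 1 := by
          rw [div_lt_one hC0]; exact hC1
        linarith
      have hstep1 : Dbar - D (t+1) ≤ (1 - 1/C) * (Dbar - D t) := by
        have h1 := hrec t
        have h2 := hGlb t
        have h3 : (0:ℝ) < 1 / C := by positivity
        nlinarith [mul_le_mul_of_nonneg_left h2 h3.le]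
      calc Dbar - D (t+1) ≤ (1 - 1/C) * (Dbar - D t) := hstep1
        _ ≤ (1 - 1/C) * (1 - 1/C)^t := mul_le_mul_of_nonneg_left ih h1C
        _ = (1 - 1/C)^(t+1) := by ring
  -- telescoping
  have htel : ∑ t ∈ Finset.Ico T₀ T, G t ≤ C * (1 - 1/C) ^ T₀ := by
    have hterm : ∀ t, G t ≤ C * (D (t+1) - D t) := by
      intro t
      have h1 := hrec t
      have := mul_le_mul_of_nonneg_left (by linarith [h1] : (1/C) * G t ≤ D (t+1) - D t) hC0.le
      rw [← mul_assoc, mul_one_div, div_self hC0.ne', one_mul] at this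
      linarith
    calc ∑ t ∈ Finset.Ico T₀ T, G t
        ≤ ∑ t ∈ Finset.Ico T₀ T, C * (D (t+1) - D t) :=
          Finset.sum_le_sum fun t _ => hterm t
      _ = C * (D T - D T₀) := by
          rw [← Finset.mul_sum]
          congr 1
          rw [Finset.sum_Ico_eq_sub _ hTT.le, Finset.sum_range_sub, Finset.sum_range_sub]
          ring
      _ ≤ C * (Dbar - D T₀) := by
          have := hub T
          nlinarith [hC0]
      _ ≤ C * (1 - 1/C) ^ T₀ := mul_le_mul_of_nonneg_left (hdecay T₀) hC0.le
  -- cast of the cardinality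
  have hcast : (((Finset.Ico T₀ T).card : ℕ) : ℝ) = (T:ℝ) - T₀ := by
    rw [Nat.card_Ico, Nat.cast_sub hTT.le]
  have hm : (0:ℝ) < (T:ℝ) - T₀ := by
    have : (T₀:ℝ) < T := by exact_mod_cast hTT
    linarith
  -- pointwise Jensen
  have hpoint : ∀ idx : ℕ → Fin n,
      primalObj lam x φ (wvec lam x
          ((1 / ((T : ℝ) - T₀)) • ∑ t ∈ Finset.Ico T₀ T, traj step α0 idx t))
        - dualObj lam x φ
          ((1 / ((T : ℝ) - T₀)) • ∑ t ∈ Finset.Ico T₀ T, traj step α0 idx t)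
      ≤ (1 / ((T:ℝ) - T₀)) * ∑ t ∈ Finset.Ico T₀ T,
          (primalObj lam x φ (wvec lam x (traj step α0 idx t))
            - dualObj lam x φ (traj step α0 idx t)) := by
    intro idx
    have hne : (Finset.Ico T₀ T).Nonempty := by
      rw [Finset.nonempty_Ico]; exact hTT
    have := gap_avg hn lam hlam x φ hconv hne (fun t => traj step α0 idx t)
      (fun t _ => hfeas idx t)
    rw [hcast] at this
    exact this
  -- expectation of the pointwise bound
  have hmain : ExpIdx hn T (fun idx =>
      primalObj lam x φ (wvec lam x
        ((1 / ((T : ℝ) - T₀)) • ∑ t ∈ Finset.Ico T₀ T, traj step α0 idx t))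
      - dualObj lam x φ
        ((1 / ((T : ℝ) - T₀)) • ∑ t ∈ Finset.Ico T₀ T, traj step α0 idx t))
      ≤ (1 / ((T:ℝ) - T₀)) * ∑ t ∈ Finset.Ico T₀ T, G t := by
    calc ExpIdx hn T _ ≤ ExpIdx hn T (fun idx => (1 / ((T:ℝ) - T₀)) *
        ∑ t ∈ Finset.Ico T₀ T,
          (primalObj lam x φ (wvec lam x (traj step α0 idx t))
            - dualObj lam x φ (traj step α0 idx t))) := expIdx_mono hn T hpoint
      _ = (1 / ((T:ℝ) - T₀)) * ∑ t ∈ Finset.Ico T₀ T, ExpIdx hn T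
          (fun idx => primalObj lam x φ (wvec lam x (traj step α0 idx t))
            - dualObj lam x φ (traj step α0 idx t)) := by
          rw [expIdx_smul, expIdx_finsum]
      _ = (1 / ((T:ℝ) - T₀)) * ∑ t ∈ Finset.Ico T₀ T, G t := by
          congr 1
          refine Finset.sum_congr rfl fun t ht => ?_
          have htT : t ≤ T := le_of_lt (Finset.mem_Ico.mp ht).2
          have hdep : DependsOn t (fun idx =>
              primalObj lam x φ (wvec lam x (traj step α0 idx t))
                - dualObj lam x φ (traj step α0 idx t)) := by
            intro idx idx' h
            dsimp only
            rw [traj_depends h]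
          rw [expIdx_stable hn hdep htT]
  -- final scalar estimate
  have hscal : (1 / ((T:ℝ) - T₀)) * (C * (1 - 1/C) ^ T₀) ≤ εP :=
    SDCAAux.scalar_final C ((T:ℝ) - T₀) εP T₀ hC1 hm hεP hT₀
  have hGsum : (1 / ((T:ℝ) - T₀)) * ∑ t ∈ Finset.Ico T₀ T, G t
      ≤ (1 / ((T:ℝ) - T₀)) * (C * (1 - 1/C) ^ T₀) :=
    mul_le_mul_of_nonneg_left htel (by positivity)
  calc ExpIdx hn T _ ≤ (1 / ((T:ℝ) - T₀)) * ∑ t ∈ Finset.Ico T₀ T, G t := hmain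
    _ ≤ (1 / ((T:ℝ) - T₀)) * (C * (1 - 1/C) ^ T₀) := hGsum
    _ ≤ εP := hscal
end
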